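/- arXiv:1003.1568 — 7 statements merged into one kernel-verified Lean document; each statement's English description precedes it below -/
import Mathlib

section
/- Let A be a commutative ring, let B be a commutative ring containing A as a subring, and let f ∈ A be a nonzerodivisor in both A and B. If the A-modules B/A, A/fA and B/fB all have finite length, then the A-modules A/fA and B/fB have equal length. -/
/-! Auxiliary lemmas -/

section ChainBound

variable {α : Type*} [Lattice α] [IsModularLattice α]

/-- In a modular lattice, any strictly increasing chain lying between the endpoints of a
covering chain of length `n` has length at most `n`. -/
lemma length_le_of_covChain :
    ∀ (n : ℕ) (c : RelSeries {(a, b) : α × α | a ⋖ b}), c.length = n →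
      ∀ p : LTSeries α, c.head ≤ p.head → p.last ≤ c.last → p.length ≤ n := by
  intro n
  induction n with
  | zero =>
    intro c hc p h1 h2
    by_contra h
    have h0 : 0 < p.length := by omega
    have hlt : p.head < p.last := p.strictMono (by
      rw [Fin.lt_def]
      simpa using h0)
    have hce : c.head = c.last := congrArg c (Fin.ext (by simp [hc]))
    exact lt_irrefl p.head (hlt.trans_le (h2.trans (le_of_eq hce.symm |>.trans h1)))
  | succ n ih =>
    intro c hc p h1 h2
    rcases Nat.eq_zero_or_pos p.length with hp | hp
    · omega
    have hc0 : c.length ≠ 0 := by omega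
    set N := c.eraseLast.last with hNdef
    have hcov : N ⋖ c.last := c.eraseLast_last_rel_last hc0
    have hheadN : c.head ≤ N :=
      LTSeries.head_le_last (c.eraseLast.ofLE (fun ⟨_, _⟩ h => h.lt))
    have hup : ∀ i, p i ≤ c.last := fun i => (p.monotone (Fin.le_last i)).trans h2
    let q : Fin (p.length + 1) → α := fun i => p i ⊓ N
    have hqmono : Monotone q := fun i j hij => inf_le_inf_right N (p.monotone hij)
    have key1 : ∀ i j : Fin p.length, i < j →
        ¬ q i.castSucc < q i.succ → ¬ q j.castSucc < q j.succ → False := by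
      intro i j hij hbi hbj
      have heqi : q i.castSucc = q i.succ :=
        ((hqmono (Fin.castSucc_lt_succ (i := i)).le).lt_or_eq).resolve_left hbi
      have heqj : q j.castSucc = q j.succ :=
        ((hqmono (Fin.castSucc_lt_succ (i := j)).le).lt_or_eq).resolve_left hbj
      have hi : p i.castSucc ⊔ N < p i.succ ⊔ N :=
        sup_lt_sup_of_lt_of_inf_le_inf (p.strictMono (Fin.castSucc_lt_succ (i := i))) heqi.ge
      have hj : p j.castSucc ⊔ N < p j.succ ⊔ N :=
        sup_lt_sup_of_lt_of_inf_le_inf (p.strictMono (Fin.castSucc_lt_succ (i := j))) heqj.ge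
      have hitop : p i.succ ⊔ N = c.last := by
        rcases hcov.eq_or_eq le_sup_right (sup_le (hup _) hcov.le) with h | h
        · exact absurd (hi.trans_le h.le) le_sup_right.not_gt
        · exact h
      have hjbot : p j.castSucc ⊔ N = N := by
        rcases hcov.eq_or_eq le_sup_right (sup_le (hup _) hcov.le) with h | h
        · exact h
        · exact absurd (h ▸ hj) (sup_le (hup _) hcov.le).not_gt
      have hle' : i.succ ≤ j.castSucc := by
        rw [Fin.le_def, Fin.val_succ, Fin.coe_castSucc]
        exact Fin.lt_def.mp hij
      have hfin : c.last ≤ N := by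
        calc c.last = p i.succ ⊔ N := hitop.symm
          _ ≤ p j.castSucc ⊔ N := sup_le_sup_right (p.monotone hle') N
          _ = N := hjbot
      exact hcov.lt.not_ge hfin
    have hcel : c.eraseLast.length = n := by
      show c.length - 1 = n
      omega
    by_cases hall : ∀ i : Fin p.length, q i.castSucc < q i.succ
    · let q' : LTSeries α := LTSeries.mk p.length q (Fin.strictMono_iff_lt_succ.mpr hall)
      have hb1 : c.eraseLast.head ≤ q'.head := le_inf h1 hheadN
      have hb2 : q'.last ≤ c.eraseLast.last := inf_le_right
      have := ih c.eraseLast hcel q' hb1 hb2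
      exact Nat.le_succ_of_le this
    · push_neg at hall
      obtain ⟨k, hk⟩ := hall
      have heqk : q k.castSucc = q k.succ :=
        ((hqmono (Fin.castSucc_lt_succ (i := k)).le).lt_or_eq).resolve_left hk
      have hother : ∀ i : Fin p.length, i ≠ k → q i.castSucc < q i.succ := by
        intro i hik
        by_contra hbad
        rcases hik.lt_or_gt with h | h
        · exact key1 i k h hbad hk
        · exact key1 k i h hk hbad
      have hkv : (k : ℕ) < p.length := k.2
      let f1 : Fin ((k : ℕ) + 1) → α := fun j => q ⟨j.1, by omega⟩
      have hf1 : StrictMono f1 := by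
        rw [Fin.strictMono_iff_lt_succ]
        intro j
        have hj : (j : ℕ) < (k : ℕ) := j.2
        have hne : (⟨j.1, by omega⟩ : Fin p.length) ≠ k := by
          intro h
          have := congrArg Fin.val h
          simp only at this
          omega
        exact hother ⟨j.1, by omega⟩ hne
      let f2 : Fin (p.length - ((k : ℕ) + 1) + 1) → α :=
        fun j => q ⟨(k : ℕ) + 1 + j.1, by omega⟩
      have hf2 : StrictMono f2 := by
        rw [Fin.strictMono_iff_lt_succ]
        intro j
        have hj : (j : ℕ) < p.length - ((k : ℕ) + 1) := j.2
        have hne : (⟨(k : ℕ) + 1 + j.1, by omega⟩ : Fin p.length) ≠ k := by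
          intro h
          have := congrArg Fin.val h
          simp only at this
          omega
        exact hother ⟨(k : ℕ) + 1 + j.1, by omega⟩ hne
      let p1 : LTSeries α := LTSeries.mk (k : ℕ) f1 hf1
      let p2 : LTSeries α := LTSeries.mk (p.length - ((k : ℕ) + 1)) f2 hf2
      have hconn : p1.last = p2.head := heqk
      let p' : LTSeries α := RelSeries.smash p1 p2 hconn
      have hb1 : c.eraseLast.head ≤ p'.head := by
        rw [RelSeries.head_smash]
        exact le_inf (h1.trans (p.monotone (Fin.zero_le _))) hheadN
      have hb2 : p'.last ≤ c.eraseLast.last := by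
        rw [RelSeries.last_smash]
        exact inf_le_right
      have := ih c.eraseLast hcel p' hb1 hb2
      have hlen : p'.length = (k : ℕ) + (p.length - ((k : ℕ) + 1)) := rfl
      omega

/-- In a bounded modular lattice with a covering chain from `⊥` to `⊤` of length `n`,
the Krull dimension equals `n`. -/
lemma krullDim_eq_covChain_length [BoundedOrder α]
    (c : RelSeries {(a, b) : α × α | a ⋖ b}) (hh : c.head = ⊥) (hl : c.last = ⊤) :
    Order.krullDim α = c.length := by
  haveI : Nonempty α := ⟨⊥⟩
  rw [Order.krullDim_eq_iSup_length]
  have hmain : (⨆ (p : LTSeries α), (p.length : ℕ∞)) = (c.length : ℕ∞) := by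
    apply le_antisymm
    · refine iSup_le fun p => ?_
      have := length_le_of_covChain c.length c rfl p (by rw [hh]; exact bot_le)
        (by rw [hl]; exact le_top)
      exact_mod_cast this
    · exact le_iSup_of_le (c.ofLE (fun ⟨_, _⟩ h => h.lt)) le_rfl
  rw [hmain]
  norm_cast

end ChainBound

section Modules

variable {R : Type*} [Ring R] {M : Type*} [AddCommGroup M] [Module R M]

lemma exists_covChain_of_isFiniteLength (h : IsFiniteLength R M) :
    ∃ c : RelSeries {(a, b) : Submodule R M × Submodule R M | a ⋖ b},
      c.head = ⊥ ∧ c.last = ⊤ := by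
  obtain ⟨s, h1, h2⟩ := isFiniteLength_iff_exists_compositionSeries.mp h
  exact ⟨⟨s.length, s.toFun, fun i => s.step i⟩, h1, h2⟩

end Modules

/-- The length of an `R`-module `M`, defined as the Krull dimension of its lattice of
submodules (i.e. the supremum of the lengths of chains of submodules). -/
noncomputable def moduleLength (R M : Type*) [Ring R] [AddCommGroup M] [Module R M] :
    WithBot ℕ∞ :=
  Order.krullDim (Submodule R M)

section Modules2

variable {R : Type*} [Ring R] {M : Type*} [AddCommGroup M] [Module R M]

lemma moduleLength_eq_nat (h : IsFiniteLength R M) :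
    ∃ n : ℕ, moduleLength R M = n := by
  obtain ⟨c, hh, hl⟩ := exists_covChain_of_isFiniteLength h
  exact ⟨c.length, krullDim_eq_covChain_length c hh hl⟩

lemma moduleLength_congr {N : Type*} [AddCommGroup N] [Module R N] (e : M ≃ₗ[R] N) :
    moduleLength R M = moduleLength R N :=
  Order.krullDim_eq_of_orderIso (Submodule.orderIsoMapComap e)

lemma covBy_coe_of_le {α : Type*} [Lattice α] {N : α} {x y : {p : α // p ≤ N}}
    (h : x ⋖ y) : (x : α) ⋖ (y : α) := by
  refine ⟨Subtype.coe_lt_coe.mpr h.lt, fun z hz1 hz2 => ?_⟩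
  exact h.2 (Subtype.coe_lt_coe.mp (show (x : α) < (⟨z, hz2.le.trans y.2⟩ : {p : α // p ≤ N}) from hz1))
    (Subtype.coe_lt_coe.mp (show ((⟨z, hz2.le.trans y.2⟩ : {p : α // p ≤ N}) : α) < y from hz2))

lemma covBy_coe_of_ge {α : Type*} [Lattice α] {N : α} {x y : {p : α // N ≤ p}}
    (h : x ⋖ y) : (x : α) ⋖ (y : α) := by
  refine ⟨Subtype.coe_lt_coe.mpr h.lt, fun z hz1 hz2 => ?_⟩
  exact h.2 (Subtype.coe_lt_coe.mp (show (x : α) < (⟨z, x.2.trans hz1.le⟩ : {p : α // N ≤ p}) from hz1))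
    (Subtype.coe_lt_coe.mp (show ((⟨z, x.2.trans hz1.le⟩ : {p : α // N ≤ p}) : α) < y from hz2))

lemma isFiniteLength_of_submodule_quotient (N : Submodule R M)
    (h1 : IsFiniteLength R N) (h2 : IsFiniteLength R (M ⧸ N)) : IsFiniteLength R M := by
  rw [isFiniteLength_iff_isNoetherian_isArtinian] at h1 h2 ⊢
  exact ⟨(isNoetherian_iff_submodule_quotient N).mpr ⟨h1.1, h2.1⟩,
    (isArtinian_iff_submodule_quotient N).mpr ⟨h1.2, h2.2⟩⟩

lemma moduleLength_additive (h : IsFiniteLength R M) (N : Submodule R M) :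
    moduleLength R M = moduleLength R N + moduleLength R (M ⧸ N) := by
  rw [isFiniteLength_iff_isNoetherian_isArtinian] at h
  obtain ⟨h1, h2⟩ := h
  have hN : IsFiniteLength R N := isFiniteLength_iff_isNoetherian_isArtinian.mpr
    ⟨((isNoetherian_iff_submodule_quotient N).mp h1).1,
     ((isArtinian_iff_submodule_quotient N).mp h2).1⟩
  have hQ : IsFiniteLength R (M ⧸ N) := isFiniteLength_iff_isNoetherian_isArtinian.mpr
    ⟨((isNoetherian_iff_submodule_quotient N).mp h1).2,
     ((isArtinian_iff_submodule_quotient N).mp h2).2⟩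
  obtain ⟨cN, hN1, hN2⟩ := exists_covChain_of_isFiniteLength hN
  obtain ⟨cQ, hQ1, hQ2⟩ := exists_covChain_of_isFiniteLength hQ
  let e1 := Submodule.MapSubtype.orderIso N
  let c1 : RelSeries {(a, b) : Submodule R M × Submodule R M | a ⋖ b} :=
    ⟨cN.length, fun i => (e1 (cN i)).1, fun i =>
      covBy_coe_of_le ((apply_covBy_apply_iff e1).mpr (cN.step i))⟩
  let e2 := Submodule.comapMkQRelIso N
  let c2 : RelSeries {(a, b) : Submodule R M × Submodule R M | a ⋖ b} :=
    ⟨cQ.length, fun i => (e2 (cQ i)).1, fun i =>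
      covBy_coe_of_ge ((apply_covBy_apply_iff e2).mpr (cQ.step i))⟩
  have hc1h : c1.head = ⊥ := by
    show (e1 cN.head).1 = ⊥
    rw [hN1]
    exact Submodule.map_bot _
  have hc1l : c1.last = N := by
    show (e1 cN.last).1 = N
    rw [hN2]
    exact Submodule.map_subtype_top _
  have hc2h : c2.head = N := by
    show (e2 cQ.head).1 = N
    rw [hQ1]
    exact (Submodule.comap_bot _).trans (Submodule.ker_mkQ N)
  have hc2l : c2.last = ⊤ := by
    show (e2 cQ.last).1 = ⊤
    rw [hQ2]
    exact Submodule.comap_top _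
  let c : RelSeries {(a, b) : Submodule R M × Submodule R M | a ⋖ b} :=
    RelSeries.smash c1 c2 (hc1l.trans hc2h.symm)
  have hM : moduleLength R M = ((cN.length + cQ.length : ℕ) : WithBot ℕ∞) := by
    have := krullDim_eq_covChain_length c
      (by rw [RelSeries.head_smash]; exact hc1h)
      (by rw [RelSeries.last_smash]; exact hc2l)
    exact this
  have hNl : moduleLength R N = (cN.length : WithBot ℕ∞) :=
    krullDim_eq_covChain_length cN hN1 hN2
  have hQl : moduleLength R (M ⧸ N) = (cQ.length : WithBot ℕ∞) :=
    krullDim_eq_covChain_length cQ hQ1 hQ2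
  rw [hM, hNl, hQl]
  push_cast
  rfl

end Modules2

/-- Let `A ⊆ B` be commutative rings and `f ∈ A` a nonzerodivisor in both `A` and `B`.
If the `A`-modules `B/A`, `A/fA` and `B/fB` have finite length, then `A/fA` and `B/fB`
have equal length as `A`-modules. -/
theorem length_quotient_eq_of_finiteLength
    (A B : Type*) [CommRing A] [CommRing B] [Algebra A B]
    (hAB : Function.Injective (algebraMap A B))
    (f : A) (hfA : f ∈ nonZeroDivisors A) (hfB : algebraMap A B f ∈ nonZeroDivisors B)
    (hBA : IsFiniteLength A (B ⧸ LinearMap.range (Algebra.linearMap A B)))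
    (hAfA : IsFiniteLength A (A ⧸ Ideal.span {f}))
    (hBfB : IsFiniteLength A
      (B ⧸ (Ideal.span {algebraMap A B f}).restrictScalars A)) :
    moduleLength A (A ⧸ Ideal.span {f}) =
      moduleLength A (B ⧸ (Ideal.span {algebraMap A B f}).restrictScalars A) := by
  classical
  set L : A →ₗ[A] B := Algebra.linearMap A B with hLdef
  set b : B := algebraMap A B f with hbdef
  set A' : Submodule A B := LinearMap.range L with hA'def
  set I : Submodule A B := Submodule.map L (Ideal.span {f} : Ideal A) with hIdef
  set J : Submodule A B := (Ideal.span {b}).restrictScalars A with hJdef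
  have hIA' : I ≤ A' := by
    rintro x ⟨a, -, rfl⟩
    exact ⟨a, rfl⟩
  have hIJ : I ≤ J := by
    rintro x ⟨a, ha, rfl⟩
    obtain ⟨c, rfl⟩ := Ideal.mem_span_singleton'.mp ha
    refine (Submodule.restrictScalars_mem A _ _).mpr (Ideal.mem_span_singleton'.mpr
      ⟨algebraMap A B c, ?_⟩)
    simp [hLdef, hbdef, map_mul]
  -- the module X = B / fA
  -- first isomorphism : A/fA ≃ A'/fA' (as submodule of X)
  let ψ : A →ₗ[A] B ⧸ I := I.mkQ ∘ₗ L
  have hker1 : LinearMap.ker ψ = Ideal.span {f} := by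
    ext a
    simp only [ψ, LinearMap.mem_ker, LinearMap.comp_apply, Submodule.mkQ_apply,
      Submodule.Quotient.mk_eq_zero]
    constructor
    · rintro ⟨a', ha', h⟩
      obtain rfl : a' = a := hAB h
      exact ha'
    · intro ha
      exact ⟨a, ha, rfl⟩
  have hrange1 : LinearMap.range ψ = A'.map I.mkQ := by
    rw [LinearMap.range_comp]
  let iso1 : (A ⧸ Ideal.span {f}) ≃ₗ[A] (A'.map I.mkQ : Submodule A (B ⧸ I)) :=
    (Submodule.quotEquivOfEq _ _ hker1.symm) ≪≫ₗ ψ.quotKerEquivRange ≪≫ₗ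
      (LinearEquiv.ofEq _ _ hrange1)
  -- second isomorphism : B/A ≃ fB/fA (as submodule of X), via multiplication by f
  let φ : B →ₗ[A] B ⧸ I := I.mkQ ∘ₗ (LinearMap.mulLeft A b)
  have hkerφ : LinearMap.ker φ = A' := by
    ext x
    simp only [φ, LinearMap.mem_ker, LinearMap.comp_apply, LinearMap.mulLeft_apply,
      Submodule.mkQ_apply, Submodule.Quotient.mk_eq_zero]
    constructor
    · rintro ⟨a, ha, h⟩
      obtain ⟨c, rfl⟩ := Ideal.mem_span_singleton'.mp ha
      have hL : L (c * f) = b * algebraMap A B c := by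
        simp [hLdef, hbdef, map_mul, mul_comm]
      rw [hL] at h
      obtain rfl : algebraMap A B c = x := (mul_cancel_left_mem_nonZeroDivisors hfB).mp h
      exact ⟨c, rfl⟩
    · rintro ⟨a, rfl⟩
      refine ⟨f * a, Ideal.mem_span_singleton'.mpr ⟨a, mul_comm a f⟩, ?_⟩
      simp [hLdef, hbdef, map_mul]
  have hrangeφ : LinearMap.range φ = J.map I.mkQ := by
    rw [LinearMap.range_comp]
    congr 1
    ext x
    simp only [LinearMap.mem_range, LinearMap.mulLeft_apply, hJdef,
      Submodule.restrictScalars_mem, Ideal.mem_span_singleton']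
    constructor
    · rintro ⟨y, rfl⟩
      exact ⟨y, mul_comm y b⟩
    · rintro ⟨y, rfl⟩
      exact ⟨y, mul_comm b y⟩
  let iso2 : (B ⧸ A') ≃ₗ[A] (J.map I.mkQ : Submodule A (B ⧸ I)) :=
    (Submodule.quotEquivOfEq _ _ hkerφ.symm) ≪≫ₗ φ.quotKerEquivRange ≪≫ₗ
      (LinearEquiv.ofEq _ _ hrangeφ)
  -- quotient isomorphisms
  let isoq1 : ((B ⧸ I) ⧸ (A'.map I.mkQ)) ≃ₗ[A] B ⧸ A' :=
    Submodule.quotientQuotientEquivQuotient I A' hIA'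
  let isoq2 : ((B ⧸ I) ⧸ (J.map I.mkQ)) ≃ₗ[A] B ⧸ J :=
    Submodule.quotientQuotientEquivQuotient I J hIJ
  -- finite length facts
  have hC : IsFiniteLength A (B ⧸ A') := hBA
  have hY1 : IsFiniteLength A (A'.map I.mkQ : Submodule A (B ⧸ I)) :=
    iso1.isFiniteLength hAfA
  have hq1 : IsFiniteLength A ((B ⧸ I) ⧸ (A'.map I.mkQ)) :=
    isoq1.symm.isFiniteLength hC
  have hX : IsFiniteLength A (B ⧸ I) :=
    isFiniteLength_of_submodule_quotient _ hY1 hq1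
  -- the numbers
  obtain ⟨n1, e1⟩ := moduleLength_eq_nat hAfA
  obtain ⟨nC, eC⟩ := moduleLength_eq_nat hC
  obtain ⟨n2, e2⟩ := moduleLength_eq_nat hBfB
  have E1 : moduleLength A (B ⧸ I) = (n1 : WithBot ℕ∞) + nC := by
    rw [moduleLength_additive hX (A'.map I.mkQ), ← moduleLength_congr iso1,
      moduleLength_congr isoq1, e1, eC]
  have E2 : moduleLength A (B ⧸ I) = (nC : WithBot ℕ∞) + n2 := by
    rw [moduleLength_additive hX (J.map I.mkQ), ← moduleLength_congr iso2,
      moduleLength_congr isoq2, eC, e2]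
  have hnat : n1 + nC = nC + n2 := by
    have : ((n1 + nC : ℕ) : WithBot ℕ∞) = ((nC + n2 : ℕ) : WithBot ℕ∞) := by
      push_cast
      rw [← E1, ← E2]
    exact_mod_cast this
  have hn : n1 = n2 := by omega
  rw [e1, e2, hn]
end

section
/- Let O be a ℂ-subalgebra of ℂ[[t]] such that ℂ[[t]]/O is finite-dimensional over ℂ, and let f ∈ O be nonzero. Then the ℂ-vector space O/fO is finite-dimensional and dim_ℂ O/fO = ord(f). -/
set_option maxHeartbeats 1000000
set_option synthInstance.maxHeartbeats 400000

/-- The order of a formal power series: the smallest `i` such that the coefficient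
of `t^i` is nonzero (junk value `0` for the zero series). -/
noncomputable def ord (f : PowerSeries ℂ) : ℕ :=
  sInf {i : ℕ | PowerSeries.coeff i f ≠ 0}

open PowerSeries Submodule LinearMap in
/-- If `O ⊆ ℂ[[t]]` is a `ℂ`-subalgebra with `dim_ℂ ℂ[[t]]/O < ∞` and `f ∈ O` is nonzero,
then `O/fO` is finite dimensional of dimension `ord f`. -/
theorem finrank_quotient_span_eq_ord
    (O : Subalgebra ℂ (PowerSeries ℂ))
    (hO : FiniteDimensional ℂ ((PowerSeries ℂ) ⧸ Subalgebra.toSubmodule O))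
    (f : PowerSeries ℂ) (hfO : f ∈ O) (hf : f ≠ 0) :
    FiniteDimensional ℂ (O ⧸ Ideal.span {(⟨f, hfO⟩ : O)}) ∧
      Module.finrank ℂ (O ⧸ Ideal.span {(⟨f, hfO⟩ : O)}) = ord f := by
  classical
  set n : ℕ := ord f with hn
  -- basic coefficient facts about `n = ord f`
  have hne : {i : ℕ | PowerSeries.coeff i f ≠ 0}.Nonempty := by
    by_contra h
    rw [Set.not_nonempty_iff_eq_empty, Set.eq_empty_iff_forall_notMem] at h
    exact hf (PowerSeries.ext fun i => not_not.mp (h i))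
  have hcn : PowerSeries.coeff n f ≠ 0 := Nat.sInf_mem hne
  have hlow : ∀ i < n, PowerSeries.coeff i f = 0 := fun i hi =>
    not_not.mp fun h => (Nat.sInf_le h).not_gt hi
  -- `f = X^n * g` with `g` a unit
  obtain ⟨g, hg⟩ : (X : PowerSeries ℂ) ^ n ∣ f := X_pow_dvd_iff.mpr hlow
  have hgu : IsUnit g := by
    rw [PowerSeries.isUnit_iff_constantCoeff, isUnit_iff_ne_zero,
      ← coeff_zero_eq_constantCoeff_apply]
    intro h0
    apply hcn
    rw [hg]
    simpa using (coeff_X_pow_mul g n 0).trans h0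
  -- key linear maps and submodules
  set Lf : PowerSeries ℂ →ₗ[ℂ] PowerSeries ℂ := LinearMap.mulLeft ℂ f with hLf
  set A : Submodule ℂ (PowerSeries ℂ) := Subalgebra.toSubmodule O with hA
  set N : Submodule ℂ (PowerSeries ℂ) := A.map Lf with hN
  set FM : Submodule ℂ (PowerSeries ℂ) := LinearMap.range Lf with hFM
  have hNA : N ≤ A := by
    rintro _ ⟨a, ha, rfl⟩
    exact O.mul_mem hfO ha
  have hNFM : N ≤ FM := by
    rintro _ ⟨a, _, rfl⟩
    exact ⟨a, rfl⟩
  -- `f ∣ x ↔ X^n ∣ x`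
  have hdvd : ∀ x : PowerSeries ℂ, f ∣ x ↔ (X : PowerSeries ℂ) ^ n ∣ x := by
    intro x
    rw [hg]
    exact hgu.mul_right_dvd
  -- the coefficient map onto `Fin n → ℂ`
  set φ : PowerSeries ℂ →ₗ[ℂ] (Fin n → ℂ) :=
    LinearMap.pi (fun i : Fin n => PowerSeries.coeff (i : ℕ)) with hφ
  have hφsurj : Function.Surjective φ := by
    intro v
    refine ⟨PowerSeries.mk (fun i => if h : i < n then v ⟨i, h⟩ else 0), ?_⟩
    funext i
    simp [hφ, PowerSeries.coeff_mk, i.isLt]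
  have hkerφ : LinearMap.ker φ = FM := by
    ext x
    simp only [hFM, LinearMap.mem_ker, LinearMap.mem_range, hφ]
    constructor
    · intro h
      have hx : (X : PowerSeries ℂ) ^ n ∣ x := by
        rw [X_pow_dvd_iff]
        intro m hm
        exact congrFun h ⟨m, hm⟩
      obtain ⟨c, hc⟩ := (hdvd x).mpr hx
      exact ⟨c, by simp [hLf, hc]⟩
    · rintro ⟨c, rfl⟩
      have : (X : PowerSeries ℂ) ^ n ∣ Lf c := (hdvd _).mp ⟨c, by simp [hLf]⟩
      funext i
      simpa using X_pow_dvd_iff.mp this i i.isLt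
  -- `M ⧸ FM ≃ Fin n → ℂ`
  have eFM : (PowerSeries ℂ ⧸ FM) ≃ₗ[ℂ] (Fin n → ℂ) :=
    (Submodule.quotEquivOfEq FM (LinearMap.ker φ) hkerφ.symm).trans
      (φ.quotKerEquivOfSurjective hφsurj)
  haveI hFMfin : FiniteDimensional ℂ (PowerSeries ℂ ⧸ FM) := eFM.symm.finiteDimensional
  have hFMrank : Module.finrank ℂ (PowerSeries ℂ ⧸ FM) = n := by
    rw [eFM.finrank_eq, Module.finrank_fin_fun]
  -- the map `ψ : M → M ⧸ N` with kernel `A` and range `FM.map N.mkQ`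
  set ψ : PowerSeries ℂ →ₗ[ℂ] (PowerSeries ℂ ⧸ N) := N.mkQ ∘ₗ Lf with hψ
  have hkerψ : LinearMap.ker ψ = A := by
    ext x
    simp only [hψ, LinearMap.mem_ker, LinearMap.coe_comp, Function.comp_apply,
      Submodule.mkQ_apply, Submodule.Quotient.mk_eq_zero, hN, Submodule.mem_map]
    constructor
    · rintro ⟨a, ha, hax⟩
      have : a = x := by
        have := hax
        simp only [hLf, LinearMap.mulLeft_apply] at this
        exact mul_left_cancel₀ hf this
      rwa [this] at ha
    · intro hx
      exact ⟨x, hx, rfl⟩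
  have hranψ : LinearMap.range ψ = FM.map N.mkQ := by
    rw [hψ, LinearMap.range_comp, ← hFM]
  have eMA : (PowerSeries ℂ ⧸ A) ≃ₗ[ℂ] ↥(FM.map N.mkQ) :=
    ((Submodule.quotEquivOfEq A (LinearMap.ker ψ) hkerψ.symm).trans
      ψ.quotKerEquivRange).trans (LinearEquiv.ofEq _ _ hranψ)
  -- the map `χ : O → M ⧸ N` with kernel the span of `f` and range `A.map N.mkQ`
  set I : Ideal O := Ideal.span {(⟨f, hfO⟩ : O)} with hI
  set χ : ↥O →ₗ[ℂ] (PowerSeries ℂ ⧸ N) := N.mkQ ∘ₗ A.subtype with hχ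
  have hkerχ : I.restrictScalars ℂ = LinearMap.ker χ := by
    ext x
    simp only [Submodule.restrictScalars_mem, hI, Ideal.mem_span_singleton, hχ,
      LinearMap.mem_ker, LinearMap.coe_comp, Function.comp_apply, Submodule.coe_subtype,
      Submodule.mkQ_apply, Submodule.Quotient.mk_eq_zero, hN, Submodule.mem_map]
    constructor
    · rintro ⟨c, rfl⟩
      refine ⟨(c : PowerSeries ℂ), c.2, ?_⟩
      show f * (c : PowerSeries ℂ) = (((⟨f, hfO⟩ : O) * c : O) : PowerSeries ℂ)
      rw [MulMemClass.coe_mul]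
    · rintro ⟨a, ha, hax⟩
      refine ⟨⟨a, ha⟩, ?_⟩
      apply Subtype.ext
      simp only [hLf, LinearMap.mulLeft_apply] at hax
      rw [MulMemClass.coe_mul]
      exact hax.symm
  have hranχ : LinearMap.range χ = A.map N.mkQ := by
    rw [hχ, LinearMap.range_comp, Submodule.range_subtype]
  have eOI : (O ⧸ I) ≃ₗ[ℂ] ↥(A.map N.mkQ) :=
    ((Submodule.Quotient.restrictScalarsEquiv ℂ I).symm.trans
      ((Submodule.quotEquivOfEq _ _ hkerχ).trans χ.quotKerEquivRange)).trans
      (LinearEquiv.ofEq _ _ hranχ)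
  -- quotient-of-quotient identifications
  have eqq1 : ((PowerSeries ℂ ⧸ N) ⧸ (FM.map N.mkQ)) ≃ₗ[ℂ] PowerSeries ℂ ⧸ FM :=
    Submodule.quotientQuotientEquivQuotient N FM hNFM
  have eqq2 : ((PowerSeries ℂ ⧸ N) ⧸ (A.map N.mkQ)) ≃ₗ[ℂ] PowerSeries ℂ ⧸ A :=
    Submodule.quotientQuotientEquivQuotient N A hNA
  -- finiteness of `M ⧸ N`
  haveI hW1fin : FiniteDimensional ℂ ↥(FM.map N.mkQ) := eMA.finiteDimensional
  haveI hVfin : FiniteDimensional ℂ (PowerSeries ℂ ⧸ N) := by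
    have hr : Module.rank ℂ (PowerSeries ℂ ⧸ N) < Cardinal.aleph0 := by
      rw [← Submodule.rank_quotient_add_rank (FM.map N.mkQ)]
      refine Cardinal.add_lt_aleph0 ?_ (Module.rank_lt_aleph0 ℂ _)
      rw [eqq1.rank_eq]
      exact Module.rank_lt_aleph0 ℂ _
    exact Module.rank_lt_aleph0_iff.mp hr
  -- rank counting
  have hc1 : Module.finrank ℂ ((PowerSeries ℂ ⧸ N) ⧸ (FM.map N.mkQ)) +
      Module.finrank ℂ ↥(FM.map N.mkQ) = Module.finrank ℂ (PowerSeries ℂ ⧸ N) :=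
    Submodule.finrank_quotient_add_finrank _
  have hc2 : Module.finrank ℂ ((PowerSeries ℂ ⧸ N) ⧸ (A.map N.mkQ)) +
      Module.finrank ℂ ↥(A.map N.mkQ) = Module.finrank ℂ (PowerSeries ℂ ⧸ N) :=
    Submodule.finrank_quotient_add_finrank _
  rw [eqq1.finrank_eq, hFMrank, eMA.symm.finrank_eq] at hc1
  rw [eqq2.finrank_eq] at hc2
  have hW2 : Module.finrank ℂ ↥(A.map N.mkQ) = n := by omega
  exact ⟨eOI.symm.finiteDimensional, by rw [eOI.finrank_eq, hW2]⟩
end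

section
/- Let Γ be a numerical semigroup, let Δ be a subset of ℕ with Γ ⊆ Δ, and let i ∈ ℕ be such that i + Δ ⊆ Γ. Then the set Γ ∖ (i + Δ) is finite and its cardinality equals i minus the cardinality of Δ ∖ Γ. -/
/-- Let `Γ` be a numerical semigroup, `Δ ⊆ ℕ` with `Γ ⊆ Δ`, and `i ∈ ℕ` with `i + Δ ⊆ Γ`.
Then `Γ \ (i + Δ)` is finite and its cardinality equals `i` minus the cardinality
of `Δ \ Γ` (stated additively: `#(Γ \ (i + Δ)) + #(Δ \ Γ) = i`). -/
theorem ncard_diff_add_subset (Γ : AddSubmonoid ℕ) (hΓ : ((Γ : Set ℕ)ᶜ).Finite)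
    (Δ : Set ℕ) (hΓΔ : (Γ : Set ℕ) ⊆ Δ) (i : ℕ) (hiΔ : (i + ·) '' Δ ⊆ (Γ : Set ℕ)) :
    ((Γ : Set ℕ) \ ((i + ·) '' Δ)).Finite ∧
      ((Γ : Set ℕ) \ ((i + ·) '' Δ)).ncard + (Δ \ (Γ : Set ℕ)).ncard = i := by
  set A : Set ℕ := (Γ : Set ℕ)ᶜ with hA
  set B : Set ℕ := Δᶜ with hB
  have hBA : B ⊆ A := fun x hx => fun hxG => hx (hΓΔ hxG)
  have hBfin : B.Finite := hΓ.subset hBA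
  -- complement of the shifted set
  have hC : ((i + ·) '' Δ)ᶜ = Set.Iio i ∪ (i + ·) '' B := by
    ext x
    simp only [Set.mem_compl_iff, Set.mem_image, Set.mem_union, Set.mem_Iio, hB]
    constructor
    · intro hx
      rcases lt_or_ge x i with h | h
      · exact Or.inl h
      · refine Or.inr ⟨x - i, fun hxd => hx ⟨x - i, hxd, by omega⟩, by omega⟩
    · rintro (h | ⟨y, hy, rfl⟩) ⟨z, hz, hzx⟩
      · omega
      · have : z = y := by omega
        exact hy (this ▸ hz)
  have hinj : Function.Injective (i + ·) := fun a b h => by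
    simpa using Nat.add_left_cancel (show i + a = i + b from h)
  have hCfin : (((i + ·) '' Δ)ᶜ).Finite := by
    rw [hC]
    exact (Set.finite_Iio i).union (hBfin.image _)
  have hAC : A ⊆ ((i + ·) '' Δ)ᶜ := Set.compl_subset_compl.mpr hiΔ
  have hdiff1 : (Γ : Set ℕ) \ ((i + ·) '' Δ) = ((i + ·) '' Δ)ᶜ \ A := by
    ext x; simp [hA, Set.mem_diff]; tauto
  have hdiff2 : Δ \ (Γ : Set ℕ) = A \ B := by
    ext x; simp [hA, hB, Set.mem_diff]; tauto
  have hAfin : A.Finite := hΓ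
  have hCcard : (((i + ·) '' Δ)ᶜ).ncard = i + B.ncard := by
    rw [hC, Set.ncard_union_eq ?_ (Set.finite_Iio i) (hBfin.image _)]
    · rw [Set.ncard_image_of_injective _ hinj]
      congr 1
      rw [Set.ncard_eq_toFinset_card']; simp
    · rw [Set.disjoint_left]
      rintro x hx ⟨y, _, rfl⟩
      simp at hx
  have h1 : (((i + ·) '' Δ)ᶜ \ A).ncard = (((i + ·) '' Δ)ᶜ).ncard - A.ncard :=
    Set.ncard_diff hAC hAfin
  have h2 : (A \ B).ncard = A.ncard - B.ncard := Set.ncard_diff hBA hBfin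
  have hle1 : A.ncard ≤ (((i + ·) '' Δ)ᶜ).ncard := Set.ncard_le_ncard hAC hCfin
  have hle2 : B.ncard ≤ A.ncard := Set.ncard_le_ncard hBA hAfin
  refine ⟨(hCfin.subset ?_), ?_⟩
  · rw [hdiff1]; exact Set.diff_subset
  · rw [hdiff1, hdiff2, h1, h2, hCcard]
    omega
end

section
/- Let O be a ℂ-subalgebra of ℂ[[t]] such that ℂ[[t]]/O is finite-dimensional over ℂ, let f ∈ O be nonzero with ν = ord(f), and let S = {ord(h) : h ∈ fO, h ≠ 0}. Then there exists a unique g ∈ O such that gO = fO, the coefficient of t^ν in g equals 1, and the coefficient of t^i in g equals 0 for every i < ν and for every i > ν with i ∈ S. -/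
set_option maxHeartbeats 1000000
set_option synthInstance.maxHeartbeats 400000

open PowerSeries

lemma ord_nonempty {f : PowerSeries ℂ} (hf : f ≠ 0) :
    {i : ℕ | PowerSeries.coeff i f ≠ 0}.Nonempty := by
  by_contra h
  rw [Set.not_nonempty_iff_eq_empty] at h
  apply hf
  ext n
  have : n ∉ ({i : ℕ | PowerSeries.coeff i f ≠ 0}) := by rw [h]; exact Set.notMem_empty n
  simpa using this

lemma ord_coeff_ne {f : PowerSeries ℂ} (hf : f ≠ 0) : PowerSeries.coeff (ord f) f ≠ 0 :=
  Nat.sInf_mem (ord_nonempty hf)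

lemma coeff_lt_ord {f : PowerSeries ℂ} {i : ℕ} (h : i < ord f) : PowerSeries.coeff i f = 0 := by
  by_contra hc
  exact absurd (Nat.sInf_le hc) (not_le.mpr h)

lemma ord_le {f : PowerSeries ℂ} {i : ℕ} (h : PowerSeries.coeff i f ≠ 0) : ord f ≤ i :=
  Nat.sInf_le h

lemma le_ord {f : PowerSeries ℂ} {n : ℕ} (hf : f ≠ 0) (h : ∀ i < n, PowerSeries.coeff i f = 0) :
    n ≤ ord f := by
  by_contra hc
  exact ord_coeff_ne hf (h _ (not_le.mp hc))

/-- factor out `X^(ord f)`. -/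
lemma exists_unit_factor {f : PowerSeries ℂ} (hf : f ≠ 0) :
    ∃ w : PowerSeries ℂ, PowerSeries.constantCoeff w ≠ 0 ∧ f = X ^ (ord f) * w := by
  obtain ⟨w, hw⟩ : (X : PowerSeries ℂ) ^ (ord f) ∣ f :=
    X_pow_dvd_iff.mpr (fun d hd => coeff_lt_ord hd)
  refine ⟨w, ?_, hw⟩
  have : PowerSeries.coeff (ord f) f = PowerSeries.constantCoeff w := by
    have h2 := coeff_X_pow_mul w (ord f) 0
    rw [zero_add, ← hw] at h2
    simpa using h2
  intro h0
  exact ord_coeff_ne hf (by rw [this, h0])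

lemma exists_p (O : Subalgebra ℂ (PowerSeries ℂ))
    (hO : FiniteDimensional ℂ ((PowerSeries ℂ) ⧸ Subalgebra.toSubmodule O)) :
    ∃ p : PowerSeries ℂ, p ∈ O ∧ p ≠ 0 ∧ PowerSeries.constantCoeff p = 0 := by
  classical
  set V := (PowerSeries ℂ) ⧸ Subalgebra.toSubmodule O
  set d := Module.finrank ℂ V with hd
  set v : Fin (d+1) → V := fun j => (Subalgebra.toSubmodule O).mkQ (X ^ (j.1+1)) with hv
  have hnli : ¬ LinearIndependent ℂ v := by
    intro h
    have := h.fintype_card_le_finrank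
    simp [hd] at this
  obtain ⟨c, hsum, j, hj⟩ := Fintype.not_linearIndependent_iff.mp hnli
  refine ⟨∑ i : Fin (d+1), c i • X ^ (i.1+1), ?_, ?_, ?_⟩
  · have : (Subalgebra.toSubmodule O).mkQ (∑ i : Fin (d+1), c i • X ^ (i.1+1)) = 0 := by
      rw [map_sum]
      simpa [v] using hsum
    rw [Submodule.mkQ_apply, Submodule.Quotient.mk_eq_zero] at this
    exact this
  · intro h0
    apply hj
    have := congrArg (PowerSeries.coeff (j.1+1)) h0
    rw [map_sum] at this
    rw [Finset.sum_eq_single j] at this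
    · simpa [PowerSeries.coeff_X_pow] using this
    · intro i _ hij
      have : (i.1:ℕ)+1 ≠ j.1+1 := by
        intro he; exact hij (Fin.ext (by omega))
      simp [PowerSeries.coeff_X_pow, Ne.symm this]
      intro h; exact absurd (Fin.ext h).symm hij
    · intro h; exact absurd (Finset.mem_univ j) h
  · rw [← PowerSeries.coeff_zero_eq_constantCoeff_apply, map_sum]
    apply Finset.sum_eq_zero
    intro i _
    simp [PowerSeries.coeff_X_pow]

lemma exists_conductor (O : Subalgebra ℂ (PowerSeries ℂ))
    (hO : FiniteDimensional ℂ ((PowerSeries ℂ) ⧸ Subalgebra.toSubmodule O)) :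
    ∃ N : ℕ, ∀ s : PowerSeries ℂ, (∀ i < N, PowerSeries.coeff i s = 0) → s ∈ O := by
  classical
  obtain ⟨p, hpO, hp0, hpc⟩ := exists_p O hO
  set M := Subalgebra.toSubmodule O with hM
  have hle : M ≤ M.comap (LinearMap.mulLeft ℂ p) := by
    intro x hx
    simp only [Submodule.mem_comap, LinearMap.mulLeft_apply]
    exact O.mul_mem hpO hx
  set φ := Submodule.mapQ M M (LinearMap.mulLeft ℂ p) hle with hφdef
  have hφ : ∀ s, φ (M.mkQ s) = M.mkQ (p * s) := by
    intro s
    simp [hφdef, Submodule.mapQ_apply]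
  have hpow : ∀ (n : ℕ) (s : PowerSeries ℂ), (φ^n) (M.mkQ s) = M.mkQ (p^n * s) := by
    intro n
    induction n with
    | zero => intro s; simp
    | succ n ih =>
      intro s
      rw [pow_succ', Module.End.mul_apply, ih, hφ, ← mul_assoc, ← pow_succ']
  have haev : ∀ (q : Polynomial ℂ) (s : PowerSeries ℂ),
      (Polynomial.aeval φ q) (M.mkQ s) = M.mkQ ((Polynomial.aeval p q) * s) := by
    intro q s
    rw [Polynomial.aeval_eq_sum_range (p := q) φ, Polynomial.aeval_eq_sum_range (p := q) p]
    rw [LinearMap.sum_apply, Finset.sum_mul, map_sum]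
    apply Finset.sum_congr rfl
    intro i _
    rw [LinearMap.smul_apply, hpow, smul_mul_assoc, map_smul]
  set χ := LinearMap.charpoly φ with hχ
  have hCH := LinearMap.aeval_self_charpoly φ
  have hmem : ∀ s : PowerSeries ℂ, (Polynomial.aeval p χ) * s ∈ O := by
    intro s
    have h1 := haev χ s
    rw [hCH] at h1
    simp only [LinearMap.zero_apply] at h1
    have := (Submodule.Quotient.mk_eq_zero M).mp (by rw [← Submodule.mkQ_apply]; exact h1.symm)
    exact this
  have hχ0 : (Polynomial.aeval p χ : PowerSeries ℂ) ≠ 0 := by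
    intro h0
    have hmon : χ.Monic := LinearMap.charpoly_monic φ
    have hsp : χ.Splits := IsAlgClosed.splits χ
    have hfac := hsp.eq_prod_roots_of_monic hmon
    rw [hfac] at h0
    rw [map_multiset_prod] at h0
    obtain ⟨x, hx, hx0⟩ := Multiset.mem_map.mp (Multiset.prod_eq_zero_iff.mp h0)
    rw [Multiset.mem_map] at hx
    obtain ⟨a, _, rfl⟩ := hx
    simp only [map_sub, Polynomial.aeval_X, Polynomial.aeval_C] at hx0
    have : p = algebraMap ℂ (PowerSeries ℂ) a := by
      rwa [sub_eq_zero] at hx0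
    apply hp0
    have ha : a = 0 := by
      have := congrArg (PowerSeries.constantCoeff) this
      rw [hpc] at this
      simpa using this.symm
    rw [this, ha, map_zero]
  refine ⟨ord (Polynomial.aeval p χ), ?_⟩
  intro s hs
  set q : PowerSeries ℂ := Polynomial.aeval p χ with hq
  obtain ⟨w, hw0, hwfac⟩ := exists_unit_factor hχ0
  obtain ⟨s', hs'⟩ : (X : PowerSeries ℂ) ^ (ord q) ∣ s := X_pow_dvd_iff.mpr hs
  have key : s = q * (w⁻¹ * s') := by
    rw [hwfac, hs']
    have : w * w⁻¹ = 1 := PowerSeries.mul_inv_cancel w hw0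
    rw [mul_assoc, ← mul_assoc w, this, one_mul]
  rw [key]
  exact hmem _

lemma inv_mem (O : Subalgebra ℂ (PowerSeries ℂ)) {N : ℕ}
    (hN : ∀ s : PowerSeries ℂ, (∀ i < N, PowerSeries.coeff i s = 0) → s ∈ O)
    {a : PowerSeries ℂ} (ha : a ∈ O) (h0 : PowerSeries.constantCoeff a ≠ 0) :
    a⁻¹ ∈ O ∧ a * a⁻¹ = 1 := by
  have hmi : a * a⁻¹ = 1 := PowerSeries.mul_inv_cancel a h0
  refine ⟨?_, hmi⟩
  set c := PowerSeries.constantCoeff a with hc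
  set b : PowerSeries ℂ := 1 - PowerSeries.C c⁻¹ * a with hbdef
  have hCmem : PowerSeries.C c⁻¹ ∈ O := by
    have : (PowerSeries.C) c⁻¹ = algebraMap ℂ (PowerSeries ℂ) c⁻¹ := by
      rw [PowerSeries.algebraMap_apply]; simp
    rw [this]; exact O.algebraMap_mem _
  have hbO : b ∈ O := O.sub_mem O.one_mem (O.mul_mem hCmem ha)
  have hbc : PowerSeries.constantCoeff b = 0 := by
    simp [hbdef, ← hc, inv_mul_cancel₀ h0]
  have hgeom : (∑ i ∈ Finset.range N, b^i) * (1 - b) = 1 - b^N := by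
    have h := geom_sum_mul b N
    have : (∑ i ∈ Finset.range N, b^i) * (1 - b) = -((∑ i ∈ Finset.range N, b^i) * (b - 1)) := by
      ring
    rw [this, h]; ring
  have h1b : (1 : PowerSeries ℂ) - b = PowerSeries.C c⁻¹ * a := by rw [hbdef]; ring
  have key : a⁻¹ = PowerSeries.C c⁻¹ * (∑ i ∈ Finset.range N, b^i) + a⁻¹ * b^N := by
    have e1 : PowerSeries.C c⁻¹ * (∑ i ∈ Finset.range N, b^i) = a⁻¹ * (1 - b^N) := by
      calc PowerSeries.C c⁻¹ * (∑ i ∈ Finset.range N, b^i)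
          = (a * a⁻¹) * (PowerSeries.C c⁻¹ * (∑ i ∈ Finset.range N, b^i)) := by rw [hmi]; ring
        _ = a⁻¹ * ((∑ i ∈ Finset.range N, b^i) * (PowerSeries.C c⁻¹ * a)) := by ring
        _ = a⁻¹ * ((∑ i ∈ Finset.range N, b^i) * (1 - b)) := by rw [h1b]
        _ = a⁻¹ * (1 - b^N) := by rw [hgeom]
    rw [e1]; ring
  rw [key]
  apply O.add_mem
  · exact O.mul_mem hCmem (Subalgebra.sum_mem O (fun i _ => O.pow_mem hbO i))
  · apply hN
    have hdvd : (X : PowerSeries ℂ)^N ∣ a⁻¹ * b^N :=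
      Dvd.dvd.mul_left (pow_dvd_pow_of_dvd (PowerSeries.X_dvd_iff.mpr hbc) N) _
    exact fun i hi => X_pow_dvd_iff.mp hdvd i hi

lemma coeff_mul_lt_ord {f a : PowerSeries ℂ} {i : ℕ} (hi : i < ord f) :
    PowerSeries.coeff i (f * a) = 0 := by
  rw [PowerSeries.coeff_mul]
  apply Finset.sum_eq_zero
  rintro ⟨j, l⟩ hjl
  rw [Finset.HasAntidiagonal.mem_antidiagonal] at hjl
  have hj : j < ord f := lt_of_le_of_lt (by omega) hi
  rw [coeff_lt_ord hj, zero_mul]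

lemma coeff_ord_mul (f a : PowerSeries ℂ) :
    PowerSeries.coeff (ord f) (f * a)
      = PowerSeries.coeff (ord f) f * PowerSeries.constantCoeff a := by
  rw [PowerSeries.coeff_mul]
  rw [Finset.sum_eq_single (ord f, 0)]
  · simp
  · rintro ⟨j, l⟩ hjl hne
    rw [Finset.HasAntidiagonal.mem_antidiagonal] at hjl
    have hj : j < ord f := by
      rcases lt_or_eq_of_le (show j ≤ ord f by omega) with h | h
      · exact h
      · exact absurd (by rw [h]; congr 1; omega : (j, l) = (ord f, 0)) hne
    rw [coeff_lt_ord hj, zero_mul]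
  · intro h
    exact absurd (Finset.HasAntidiagonal.mem_antidiagonal.mpr (by omega)) h

lemma C_mem (O : Subalgebra ℂ (PowerSeries ℂ)) (c : ℂ) : PowerSeries.C c ∈ O := by
  have : (PowerSeries.C) c = algebraMap ℂ (PowerSeries ℂ) c := by
    rw [PowerSeries.algebraMap_apply]; simp
  rw [this]; exact O.algebraMap_mem _

lemma elim_lemma (O : Subalgebra ℂ (PowerSeries ℂ)) (f : PowerSeries ℂ) (hf : f ≠ 0) :
    ∀ k : ℕ, ∃ a ∈ O, PowerSeries.coeff (ord f) (f * a) = 1 ∧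
      ∀ i, ord f < i → i < k → (∃ b ∈ O, f * b ≠ 0 ∧ i = ord (f * b)) →
        PowerSeries.coeff i (f * a) = 0 := by
  intro k
  induction k with
  | zero =>
    refine ⟨PowerSeries.C (PowerSeries.coeff (ord f) f)⁻¹, C_mem O _, ?_, ?_⟩
    · rw [coeff_ord_mul]
      simp [mul_inv_cancel₀ (ord_coeff_ne hf)]
    · intro i _ hik
      omega
  | succ k ih =>
    obtain ⟨a, haO, ha1, ha2⟩ := ih
    by_cases hbad : ord f < k ∧ (∃ b ∈ O, f * b ≠ 0 ∧ k = ord (f * b)) ∧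
        PowerSeries.coeff k (f * a) ≠ 0
    · obtain ⟨hνk, ⟨b, hbO, hb0, hbord⟩, hck⟩ := hbad
      set γ := PowerSeries.coeff k (f * b) with hγ
      have hγ0 : γ ≠ 0 := by
        rw [hγ, hbord]
        exact ord_coeff_ne hb0
      set c := PowerSeries.coeff k (f * a) with hcdef
      refine ⟨a - (c / γ) • b, O.sub_mem haO (O.smul_mem hbO _), ?_, ?_⟩
      · have : f * (a - (c / γ) • b) = f * a - (c / γ) • (f * b) := by
          rw [mul_sub, mul_smul_comm]
        rw [this, map_sub, map_smul, ha1, smul_eq_mul]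
        have : PowerSeries.coeff (ord f) (f * b) = 0 := by
          apply coeff_lt_ord
          rw [← hbord]; exact hνk
        rw [this, mul_zero, sub_zero]
      · intro i hνi hik hiS
        have hfab : f * (a - (c / γ) • b) = f * a - (c / γ) • (f * b) := by
          rw [mul_sub, mul_smul_comm]
        rw [hfab, map_sub, map_smul, smul_eq_mul]
        rcases Nat.lt_or_ge i k with hik' | hik'
        · rw [ha2 i hνi hik' hiS]
          have : PowerSeries.coeff i (f * b) = 0 := by
            apply coeff_lt_ord; rw [← hbord]; exact hik'
          rw [this, mul_zero, sub_zero]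
        · have hieq : i = k := by omega
          rw [hieq, ← hcdef, ← hγ, div_mul_cancel₀ _ hγ0, sub_self]
    · refine ⟨a, haO, ha1, ?_⟩
      intro i hνi hik hiS
      rcases Nat.lt_or_ge i k with hik' | hik'
      · exact ha2 i hνi hik' hiS
      · have hieq : i = k := by omega
        subst hieq
        push_neg at hbad
        by_contra hc
        exact hc (by
          by_contra hc2
          exact hc2 ((fun h1 h2 => by
            have := hbad hνi h2
            exact absurd this (by simpa using hc)) hνi hiS))


/-- Let `O ⊆ ℂ[[t]]` be a `ℂ`-subalgebra with `dim_ℂ ℂ[[t]]/O < ∞`, let `f ∈ O` be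
nonzero with `ν = ord f`, and let `S = {ord h : h ∈ fO, h ≠ 0}`.  Then there is a unique
generator `g` of the ideal `fO` whose coefficient of `t^ν` is `1` and whose coefficient
of `t^i` vanishes for all `i < ν` and all `i > ν` with `i ∈ S`. -/
theorem existsUnique_normalized_generator
    (O : Subalgebra ℂ (PowerSeries ℂ))
    (hO : FiniteDimensional ℂ ((PowerSeries ℂ) ⧸ Subalgebra.toSubmodule O))
    (f : PowerSeries ℂ) (hfO : f ∈ O) (hf : f ≠ 0) :
    ∃! g : O,
      Ideal.span {g} = Ideal.span {(⟨f, hfO⟩ : O)} ∧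
      PowerSeries.coeff (ord f) (g : PowerSeries ℂ) = 1 ∧
      (∀ i, i < ord f → PowerSeries.coeff i (g : PowerSeries ℂ) = 0) ∧
      (∀ i, i > ord f →
        i ∈ {n : ℕ | ∃ h ∈ Ideal.span ({(⟨f, hfO⟩ : O)} : Set O),
          (h : PowerSeries ℂ) ≠ 0 ∧ n = ord (h : PowerSeries ℂ)} →
        PowerSeries.coeff i (g : PowerSeries ℂ) = 0) := by
  classical
  set ν := ord f with hν
  obtain ⟨N₀, hN₀⟩ := exists_conductor O hO
  set N := N₀ + 1 with hNdef
  have hN : ∀ s : PowerSeries ℂ, (∀ i < N, PowerSeries.coeff i s = 0) → s ∈ O :=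
    fun s hs => hN₀ s (fun i hi => hs i (by omega))
  set M := ν + N with hM
  obtain ⟨a₁, ha₁O, ha₁1, ha₁2⟩ := elim_lemma O f hf M
  set g₁ := f * a₁ with hg₁
  set g : PowerSeries ℂ := ↑(PowerSeries.trunc M g₁) with hgdef
  have hgcoeff : ∀ i, PowerSeries.coeff i g
      = if i < M then PowerSeries.coeff i g₁ else 0 := by
    intro i
    rw [hgdef, Polynomial.coeff_coe, PowerSeries.coeff_trunc]
  -- the remainder r = g₁ - g is divisible by X^M
  set r := g₁ - g with hr
  have hrcoeff : ∀ i < M, PowerSeries.coeff i r = 0 := by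
    intro i hi
    rw [hr, map_sub, hgcoeff, if_pos hi, sub_self]
  obtain ⟨s', hs'⟩ : (X : PowerSeries ℂ) ^ M ∣ r := X_pow_dvd_iff.mpr hrcoeff
  obtain ⟨w, hw0, hwfac⟩ := exists_unit_factor hf
  set q : PowerSeries ℂ := w⁻¹ * ((X : PowerSeries ℂ) ^ N * s') with hq
  have hwinv : w * w⁻¹ = 1 := PowerSeries.mul_inv_cancel w hw0
  rw [← hν] at hwfac
  have hfq : f * q = r := by
    rw [hs', hq, hwfac]
    have hXM : (X : PowerSeries ℂ) ^ M = X ^ ν * X ^ N := by rw [← pow_add]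
    rw [hXM]
    calc X ^ ν * w * (w⁻¹ * (X ^ N * s')) = (w * w⁻¹) * (X ^ ν * (X ^ N * s')) := by ring
      _ = X ^ ν * X ^ N * s' := by rw [hwinv]; ring
  have hqO : q ∈ O := by
    apply hN
    have hdvd : (X : PowerSeries ℂ) ^ N ∣ q := ⟨w⁻¹ * s', by rw [hq]; ring⟩
    exact fun i hi => X_pow_dvd_iff.mp hdvd i hi
  set a := a₁ - q with ha
  have haO : a ∈ O := O.sub_mem ha₁O hqO
  have hga : g = f * a := by
    rw [ha, mul_sub, ← hg₁, hfq, hr]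
    ring
  have hνM : ν < M := by omega
  have hgν : PowerSeries.coeff ν g = 1 := by
    rw [hgcoeff, if_pos hνM]; exact ha₁1
  have hglt : ∀ i, i < ν → PowerSeries.coeff i g = 0 := by
    intro i hi
    rw [hga]
    exact coeff_mul_lt_ord hi
  have hgS : ∀ i, ν < i → (∃ b ∈ O, f * b ≠ 0 ∧ i = ord (f * b)) →
      PowerSeries.coeff i g = 0 := by
    intro i hνi hiS
    rcases Nat.lt_or_ge i M with hiM | hiM
    · rw [hgcoeff, if_pos hiM]
      exact ha₁2 i hνi hiM hiS
    · rw [hgcoeff, if_neg (by omega)]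
  have hcc : PowerSeries.constantCoeff a ≠ 0 := by
    intro h0
    have := hgν
    rw [hga, coeff_ord_mul, h0, mul_zero] at this
    exact one_ne_zero this.symm
  obtain ⟨hinvO, hainv⟩ := inv_mem O hN haO hcc
  have hgO : g ∈ O := by rw [hga]; exact O.mul_mem hfO haO
  set F : O := ⟨f, hfO⟩ with hF
  set G : O := ⟨g, hgO⟩ with hG
  -- span equality
  have hspan : Ideal.span {G} = Ideal.span {F} := by
    apply le_antisymm
    · rw [Ideal.span_le, Set.singleton_subset_iff]
      rw [SetLike.mem_coe, Ideal.mem_span_singleton]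
      exact ⟨⟨a, haO⟩, Subtype.ext (by simpa using hga)⟩
    · rw [Ideal.span_le, Set.singleton_subset_iff]
      rw [SetLike.mem_coe, Ideal.mem_span_singleton]
      refine ⟨⟨a⁻¹, hinvO⟩, Subtype.ext ?_⟩
      show f = g * a⁻¹
      rw [hga, mul_assoc, hainv, mul_one]
  -- membership in the span gives witnesses as f * b
  have hspan_mem : ∀ h : O, h ∈ Ideal.span ({F} : Set O) →
      ∃ b ∈ O, (h : PowerSeries ℂ) = f * b := by
    intro h hh
    obtain ⟨b, hb⟩ := Ideal.mem_span_singleton.mp hh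
    exact ⟨(b : PowerSeries ℂ), b.2, by rw [hb]; rfl⟩
  have hScond : ∀ i, i > ν →
      i ∈ {n : ℕ | ∃ h ∈ Ideal.span ({F} : Set O),
        (h : PowerSeries ℂ) ≠ 0 ∧ n = ord (h : PowerSeries ℂ)} →
      (∃ b ∈ O, f * b ≠ 0 ∧ i = ord (f * b)) := by
    intro i hi hiS
    obtain ⟨h, hhspan, hh0, hhord⟩ := hiS
    obtain ⟨b, hbO, hhb⟩ := hspan_mem h hhspan
    exact ⟨b, hbO, by rw [← hhb]; exact hh0, by rw [← hhb]; exact hhord⟩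
  refine ⟨G, ⟨hspan, hgν, hglt, ?_⟩, ?_⟩
  · intro i hi hiS
    exact hgS i hi (hScond i hi hiS)
  -- uniqueness
  intro g₂ ⟨hspan₂, hgν₂, hglt₂, hS₂⟩
  by_contra hne
  set d : O := g₂ - G with hd
  have hd0 : d ≠ 0 := by
    intro h
    exact hne (by rwa [sub_eq_zero] at h)
  have hdO : d ∈ Ideal.span ({F} : Set O) := by
    apply Ideal.sub_mem
    · rw [← hspan₂]; exact Ideal.mem_span_singleton_self g₂
    · rw [← hspan]; exact Ideal.mem_span_singleton_self G
  have hdcoe : (d : PowerSeries ℂ) ≠ 0 := by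
    intro h
    exact hd0 (Subtype.ext h)
  have hdcoeff : ∀ i, PowerSeries.coeff i (d : PowerSeries ℂ)
      = PowerSeries.coeff i (g₂ : PowerSeries ℂ) - PowerSeries.coeff i (G : PowerSeries ℂ) := by
    intro i
    rw [hd]
    push_cast
    rw [map_sub]
  have hdlow : ∀ i, i ≤ ν → PowerSeries.coeff i (d : PowerSeries ℂ) = 0 := by
    intro i hi
    rcases lt_or_eq_of_le hi with hi' | hi'
    · rw [hdcoeff, hglt₂ i hi', show PowerSeries.coeff i (G : PowerSeries ℂ) = 0 from hglt i hi',
        sub_zero]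
    · rw [hdcoeff, hi', hgν₂, show PowerSeries.coeff ν (G : PowerSeries ℂ) = 1 from hgν, sub_self]
  set n := ord (d : PowerSeries ℂ) with hn
  have hnν : ν < n := by
    by_contra hc
    exact ord_coeff_ne hdcoe (hdlow n (by omega))
  have hnS : n ∈ {n : ℕ | ∃ h ∈ Ideal.span ({F} : Set O),
      (h : PowerSeries ℂ) ≠ 0 ∧ n = ord (h : PowerSeries ℂ)} := ⟨d, hdO, hdcoe, rfl⟩
  have h1 : PowerSeries.coeff n (g₂ : PowerSeries ℂ) = 0 := hS₂ n hnν hnS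
  have h2 : PowerSeries.coeff n (G : PowerSeries ℂ) = 0 := hgS n hnν (hScond n hnν hnS)
  exact ord_coeff_ne hdcoe (by rw [hdcoeff, h1, h2, sub_zero])
end

section
/- Let O be a ℂ-subalgebra of ℂ[[t]] such that ℂ[[t]]/O is finite-dimensional over ℂ, set Γ = {ord(h) : h ∈ O, h ≠ 0}, fix a₀, …, a_k ∈ Γ, let j = (a₀ + Γ) ∪ ⋯ ∪ (a_k + Γ), and for each λ let Σ_λ = {γ ∈ Γ : γ > a_λ and γ ∉ j}. Then for every ideal J of O with {ord(h) : h ∈ J, h ≠ 0} = j, there exist unique scalars s_{λ,i} ∈ ℂ (for λ = 0, …, k and i ∈ Σ_λ) such that J is generated as an ideal of O by the elements f_λ = τ_{a_λ} + Σ_{i ∈ Σ_λ} s_{λ,i} τ_i. -/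
set_option maxHeartbeats 1000000
set_option synthInstance.maxHeartbeats 400000

open PowerSeries in
lemma ord_exists_coeff_ne_zero {f : PowerSeries ℂ} (hf : f ≠ 0) : ∃ n, coeff n f ≠ 0 := by
  by_contra h
  push_neg at h
  exact hf (PowerSeries.ext fun n => by simpa using h n)

open PowerSeries in
lemma ord_coeff_ne_zero {f : PowerSeries ℂ} (hf : f ≠ 0) : coeff (ord f) f ≠ 0 :=
  Nat.sInf_mem (ord_exists_coeff_ne_zero hf)

open PowerSeries in
lemma coeff_eq_zero_of_lt_ord {f : PowerSeries ℂ} {i : ℕ} (hi : i < ord f) :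
    coeff i f = 0 := by
  by_contra h
  exact absurd (Nat.sInf_le h) (not_le.mpr hi)

open PowerSeries in
lemma ord_eq_of {f : PowerSeries ℂ} {n : ℕ} (h1 : coeff n f ≠ 0)
    (h2 : ∀ i < n, coeff i f = 0) : ord f = n := by
  refine le_antisymm (Nat.sInf_le h1) ?_
  by_contra h
  push_neg at h
  exact ord_coeff_ne_zero (fun h0 => h1 (by simp [h0])) (h2 _ h)

open PowerSeries in
lemma coeff_mul_of_lt {f g : PowerSeries ℂ} {a b n : ℕ}
    (hf : ∀ i < a, coeff i f = 0) (hg : ∀ i < b, coeff i g = 0)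
    (hn : n < a + b) : coeff n (f * g) = 0 := by
  rw [PowerSeries.coeff_mul]
  refine Finset.sum_eq_zero fun p hp => ?_
  rw [Finset.HasAntidiagonal.mem_antidiagonal] at hp
  rcases lt_or_ge p.1 a with h | h
  · rw [hf _ h, zero_mul]
  · rw [hg p.2 (by omega), mul_zero]

open PowerSeries in
lemma coeff_mul_add_of {f g : PowerSeries ℂ} {a b : ℕ}
    (hf : ∀ i < a, coeff i f = 0) (hg : ∀ i < b, coeff i g = 0) :
    coeff (a + b) (f * g) = coeff a f * coeff b g := by
  rw [PowerSeries.coeff_mul]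
  refine Finset.sum_eq_single (a, b) (fun p hp hne => ?_) (by simp [Finset.mem_antidiagonal])
  rw [Finset.HasAntidiagonal.mem_antidiagonal] at hp
  rcases lt_or_ge p.1 a with h | h
  · rw [hf _ h, zero_mul]
  · rcases eq_or_lt_of_le h with h' | h'
    · exact absurd (Prod.ext h'.symm (by omega)) hne
    · rw [hg p.2 (by omega), mul_zero]

open PowerSeries in
lemma annihilateExists (O : Subalgebra ℂ (PowerSeries ℂ))
    (hO : FiniteDimensional ℂ ((PowerSeries ℂ) ⧸ Subalgebra.toSubmodule O))
    (c : ℕ) (hc1 : 1 ≤ c) (hc : (X : PowerSeries ℂ) ^ c ∈ O) (x : PowerSeries ℂ) :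
    ∃ p ∈ O, p ≠ 0 ∧ p * x ∈ O := by
  set Q := (PowerSeries ℂ) ⧸ Subalgebra.toSubmodule O
  set mk := (Subalgebra.toSubmodule O).mkQ with hmk
  have hnli : ¬ LinearIndependent ℂ (fun i : ℕ => mk (((X : PowerSeries ℂ) ^ c) ^ i * x)) := by
    intro h
    have : Finite ℕ := h.finite_of_isNoetherian
    exact not_finite ℕ
  rw [linearIndependent_iff'] at hnli
  push_neg at hnli
  obtain ⟨s, g, hg, i₁, hi₁, hgi₁⟩ := hnli
  refine ⟨∑ i ∈ s, g i • ((X : PowerSeries ℂ) ^ c) ^ i, ?_, ?_, ?_⟩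
  · exact Submodule.sum_mem _ fun i _ => (Subalgebra.toSubmodule O).smul_mem _ (pow_mem hc i)
  · intro h0
    have hco : PowerSeries.coeff (c * i₁)
        (∑ i ∈ s, g i • ((X : PowerSeries ℂ) ^ c) ^ i) = g i₁ := by
      rw [map_sum]
      rw [Finset.sum_eq_single i₁]
      · rw [map_smul, ← pow_mul, PowerSeries.coeff_X_pow, if_pos rfl, smul_eq_mul, mul_one]
      · intro b _ hb
        rw [map_smul, ← pow_mul, PowerSeries.coeff_X_pow, if_neg (by
          intro h; exact hb (Nat.eq_of_mul_eq_mul_left hc1 h).symm), smul_eq_mul, mul_zero]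
      · exact fun h => absurd hi₁ h
    rw [h0] at hco
    simp at hco
    exact hgi₁ hco.symm
  · have : (∑ i ∈ s, g i • ((X : PowerSeries ℂ) ^ c) ^ i) * x
        = ∑ i ∈ s, g i • (((X : PowerSeries ℂ) ^ c) ^ i * x) := by
      rw [Finset.sum_mul]
      exact Finset.sum_congr rfl fun i _ => smul_mul_assoc _ _ _
    rw [this, ← Subalgebra.mem_toSubmodule,
      ← Submodule.Quotient.mk_eq_zero (Subalgebra.toSubmodule O), ← Submodule.mkQ_apply, map_sum]
    simpa [hmk] using hg

open PowerSeries in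
lemma conductorExists (O : Subalgebra ℂ (PowerSeries ℂ))
    (hO : FiniteDimensional ℂ ((PowerSeries ℂ) ⧸ Subalgebra.toSubmodule O))
    (c : ℕ) (hc1 : 1 ≤ c) (hc : (X : PowerSeries ℂ) ^ c ∈ O) :
    ∃ N : ℕ, ∀ x : PowerSeries ℂ, (∀ i < N, coeff i x = 0) → x ∈ O := by
  set Q := (PowerSeries ℂ) ⧸ Subalgebra.toSubmodule O
  let b := Module.finBasis ℂ Q
  have hsur := Submodule.mkQ_surjective (Subalgebra.toSubmodule O)
  choose lift hlift using fun i => hsur (b i)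
  choose p hpO hpne hpx using fun i => annihilateExists O hO c hc1 hc (lift i)
  set P := ∏ i, p i with hP
  have hPO : P ∈ O := prod_mem fun i _ => hpO i
  have hPne : P ≠ 0 := by
    rw [hP, Finset.prod_ne_zero_iff]
    exact fun i _ => hpne i
  have hPmul : ∀ x : PowerSeries ℂ, P * x ∈ O := by
    intro x
    have hxmem : (Subalgebra.toSubmodule O).mkQ x ∈
        Submodule.map (Subalgebra.toSubmodule O).mkQ (Submodule.span ℂ (Set.range lift)) := by
      rw [Submodule.map_span, ← Set.range_comp]
      have : ((Subalgebra.toSubmodule O).mkQ ∘ lift) = b := funext fun i => hlift i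
      rw [this, b.span_eq]
      trivial
    obtain ⟨y, hy, hyx⟩ := hxmem
    have hxy : x - y ∈ O := by
      have h := hyx.symm
      rw [Submodule.mkQ_apply, Submodule.mkQ_apply, Submodule.Quotient.eq] at h
      exact h
    have hPy : P * y ∈ O := by
      refine Submodule.span_induction ?_ ?_ ?_ ?_ hy
      · rintro _ ⟨i, rfl⟩
        have hfac : P * lift i = (∏ k ∈ Finset.univ.erase i, p k) * (p i * lift i) := by
          rw [hP, ← Finset.mul_prod_erase Finset.univ p (Finset.mem_univ i)]; ring
        rw [hfac]
        exact mul_mem (prod_mem fun k _ => hpO k) (hpx i)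
      · simpa using O.zero_mem
      · intro y z _ _ hy hz
        rw [mul_add]; exact add_mem hy hz
      · intro a y _ hy
        rw [mul_smul_comm]; exact O.smul_mem hy a
    have : P * x = P * (x - y) + P * y := by ring
    rw [this]
    exact add_mem (mul_mem hPO hxy) hPy
  refine ⟨ord P, fun x hx => ?_⟩
  set N := ord P with hNdef
  obtain ⟨u, hu⟩ := (PowerSeries.X_pow_dvd_iff (φ := P) (n := N)).mpr
    (fun i hi => coeff_eq_zero_of_lt_ord hi)
  have hcc : constantCoeff u ≠ 0 := by
    have h1 : coeff N P = constantCoeff u := by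
      rw [hu]; simpa using PowerSeries.coeff_X_pow_mul u N 0
    rw [← h1]; exact ord_coeff_ne_zero hPne
  obtain ⟨U, hU⟩ := PowerSeries.isUnit_iff_constantCoeff.mpr (isUnit_iff_ne_zero.mpr hcc)
  obtain ⟨w, hw⟩ := PowerSeries.X_pow_dvd_iff.mpr hx
  have h2 : u * (↑U⁻¹ : PowerSeries ℂ) = 1 := by rw [← hU]; exact U.mul_inv
  have hx2 : x = P * (↑U⁻¹ * w) := by
    rw [hu, hw]
    linear_combination (-(X ^ N * w)) * h2
  rw [hx2]
  exact hPmul _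

open PowerSeries in
lemma idealConductor (O : Subalgebra ℂ (PowerSeries ℂ)) (N : ℕ)
    (hN : ∀ x : PowerSeries ℂ, (∀ i < N, coeff i x = 0) → x ∈ O)
    (K : Ideal O) (u : O) (hu : u ∈ K) (hune : (u : PowerSeries ℂ) ≠ 0)
    (x : PowerSeries ℂ) (hx : ∀ i < N + ord (u : PowerSeries ℂ), coeff i x = 0) :
    ∃ hxO : x ∈ O, (⟨x, hxO⟩ : O) ∈ K := by
  set m := ord (u : PowerSeries ℂ) with hm
  obtain ⟨v, hv⟩ := (PowerSeries.X_pow_dvd_iff (φ := (u : PowerSeries ℂ)) (n := m)).mpr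
    (fun i hi => coeff_eq_zero_of_lt_ord hi)
  have hcc : constantCoeff v ≠ 0 := by
    have h1 : coeff m (u : PowerSeries ℂ) = constantCoeff v := by
      rw [hv]; simpa using PowerSeries.coeff_X_pow_mul v m 0
    rw [← h1]; exact ord_coeff_ne_zero hune
  obtain ⟨V, hV⟩ := PowerSeries.isUnit_iff_constantCoeff.mpr (isUnit_iff_ne_zero.mpr hcc)
  obtain ⟨w, hw⟩ := (PowerSeries.X_pow_dvd_iff (n := N + m)).mpr hx
  set z : PowerSeries ℂ := (↑V⁻¹ : PowerSeries ℂ) * (X ^ N * w) with hz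
  have hzO : z ∈ O := by
    refine hN z fun i hi => ?_
    have hdvd : (X : PowerSeries ℂ) ^ N ∣ z := (Dvd.intro w rfl).mul_left _
    exact PowerSeries.X_pow_dvd_iff.mp hdvd i hi
  have hveq : v * (↑V⁻¹ : PowerSeries ℂ) = 1 := by rw [← hV]; exact V.mul_inv
  have hxe : x = (u : PowerSeries ℂ) * z := by
    rw [hw, hv, hz]
    have hpow : (X : PowerSeries ℂ) ^ (N + m) = X ^ N * X ^ m := pow_add X N m
    rw [hpow]
    linear_combination (-(X ^ N * X ^ m * w)) * hveq
  have hxO : x ∈ O := by rw [hxe]; exact O.mul_mem u.2 hzO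
  refine ⟨hxO, ?_⟩
  have heq : (⟨x, hxO⟩ : O) = u * ⟨z, hzO⟩ := Subtype.ext (by rw [Subalgebra.coe_mul]; exact hxe)
  rw [heq]
  exact Ideal.mul_mem_right _ _ hu

/-- Let `O ⊆ ℂ[[t]]` be a `ℂ`-subalgebra with `dim_ℂ ℂ[[t]]/O < ∞`,
`Γ = {ord h : h ∈ O, h ≠ 0}`, `a₀, …, a_k ∈ Γ`, `j = ⋃ (a_λ + Γ)`,
`Σ_λ = {γ ∈ Γ : γ > a_λ, γ ∉ j}`, and for `g ∈ Γ` let `τ g` be the normalized element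
of `O` of order `g`.  Then every ideal `J` of `O` whose set of orders is `j` is generated
by elements `f_λ = τ (a_λ) + Σ_{i ∈ Σ_λ} s_{λ,i} τ i` for unique scalars `s_{λ,i} ∈ ℂ`. -/
theorem existsUnique_scalars_generators
    (O : Subalgebra ℂ (PowerSeries ℂ))
    (hO : FiniteDimensional ℂ ((PowerSeries ℂ) ⧸ Subalgebra.toSubmodule O))
    (Γ : Set ℕ) (hΓ : Γ = {n : ℕ | ∃ h ∈ O, h ≠ 0 ∧ n = ord h})
    (k : ℕ) (a : Fin (k + 1) → ℕ) (ha : ∀ lam, a lam ∈ Γ)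
    (j : Set ℕ) (hj : j = ⋃ lam, (a lam + ·) '' Γ)
    (Sig : Fin (k + 1) → Set ℕ)
    (hSig : ∀ lam, Sig lam = {γ : ℕ | γ ∈ Γ ∧ a lam < γ ∧ γ ∉ j})
    (τ : ℕ → O)
    (hτ : ∀ g ∈ Γ,
      PowerSeries.coeff g (τ g : PowerSeries ℂ) = 1 ∧
      (∀ i, i < g → PowerSeries.coeff i (τ g : PowerSeries ℂ) = 0) ∧
      (∀ i, i > g → i ∈ Γ → PowerSeries.coeff i (τ g : PowerSeries ℂ) = 0))
    (J : Ideal O)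
    (hJ : {n : ℕ | ∃ h ∈ J, (h : PowerSeries ℂ) ≠ 0 ∧ n = ord (h : PowerSeries ℂ)} = j) :
    ∃! s : (lam : Fin (k + 1)) → (Sig lam) → ℂ,
      J = Ideal.span (Set.range fun lam =>
        τ (a lam) + ∑ᶠ i : (Sig lam), s lam i • τ (i : ℕ)) := by
  classical
  have hτ1 : ∀ g ∈ Γ, PowerSeries.coeff g (τ g : PowerSeries ℂ) = 1 := fun g hg => (hτ g hg).1
  have hτ2 : ∀ g ∈ Γ, ∀ i, i < g → PowerSeries.coeff i (τ g : PowerSeries ℂ) = 0 :=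
    fun g hg => (hτ g hg).2.1
  have hτ3 : ∀ g ∈ Γ, ∀ i, g < i → i ∈ Γ → PowerSeries.coeff i (τ g : PowerSeries ℂ) = 0 :=
    fun g hg i h1 h2 => (hτ g hg).2.2 i h1 h2
  have hΓ0 : (0 : ℕ) ∈ Γ := by
    rw [hΓ]
    exact ⟨1, O.one_mem, one_ne_zero,
      (ord_eq_of (by simp) (fun i hi => absurd hi (Nat.not_lt_zero i))).symm⟩
  have hord_mem : ∀ h : O, (h : PowerSeries ℂ) ≠ 0 → ord (h : PowerSeries ℂ) ∈ Γ := by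
    intro h hne
    rw [hΓ]
    exact ⟨h, h.2, hne, rfl⟩
  have hOinj : ∀ x y : O,
      (∀ γ ∈ Γ, PowerSeries.coeff γ (x : PowerSeries ℂ) = PowerSeries.coeff γ (y : PowerSeries ℂ)) →
      x = y := by
    intro x y hxy
    by_contra hne
    have hd : ((x - y : O) : PowerSeries ℂ) ≠ 0 := by
      intro h0
      exact hne (sub_eq_zero.mp (ZeroMemClass.coe_eq_zero.mp h0))
    have hγ := hord_mem (x - y) hd
    apply ord_coeff_ne_zero hd
    set nn := ord ((x - y : O) : PowerSeries ℂ) with hnn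
    rw [AddSubgroupClass.coe_sub, map_sub, hxy _ hγ, sub_self]
  -- Γ is cofinite
  have hScompl : (Γᶜ : Set ℕ).Finite := by
    have hli : LinearIndependent ℂ (fun n : ↥(Γᶜ) =>
        (Subalgebra.toSubmodule O).mkQ ((PowerSeries.X : PowerSeries ℂ) ^ (n : ℕ))) := by
      rw [linearIndependent_iff']
      intro sf g hg n hn
      by_contra hgn
      set q : PowerSeries ℂ := ∑ m ∈ sf, g m • (PowerSeries.X : PowerSeries ℂ) ^ (m : ℕ) with hq
      have hqO : q ∈ O := by
        rw [← Subalgebra.mem_toSubmodule, ← Submodule.Quotient.mk_eq_zero,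
          ← Submodule.mkQ_apply, hq, map_sum]
        simpa using hg
      set T := sf.filter (fun m => g m ≠ 0) with hT
      have hTne : T.Nonempty := ⟨n, Finset.mem_filter.mpr ⟨hn, hgn⟩⟩
      set n₀ := T.min' hTne with hn₀
      have hn₀T : n₀ ∈ T := T.min'_mem hTne
      have hn₀s : n₀ ∈ sf := (Finset.mem_filter.mp hn₀T).1
      have hgn₀ : g n₀ ≠ 0 := (Finset.mem_filter.mp hn₀T).2
      have hcoeffq : ∀ i : ℕ, PowerSeries.coeff i q
          = ∑ m ∈ sf, g m * (if i = (m : ℕ) then 1 else 0) := by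
        intro i
        rw [hq, map_sum]
        exact Finset.sum_congr rfl fun m _ => by
          rw [map_smul, PowerSeries.coeff_X_pow, smul_eq_mul]
      have hlead : PowerSeries.coeff (n₀ : ℕ) q = g n₀ := by
        rw [hcoeffq, Finset.sum_eq_single n₀]
        · rw [if_pos rfl, mul_one]
        · intro b _ hb
          by_cases hgb : g b = 0
          · rw [hgb, zero_mul]
          · rw [if_neg (fun hc => hb (Subtype.coe_injective hc.symm)), mul_zero]
        · intro habs; exact absurd hn₀s habs
      have hlow : ∀ i < (n₀ : ℕ), PowerSeries.coeff i q = 0 := by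
        intro i hi
        rw [hcoeffq]
        refine Finset.sum_eq_zero fun m hm => ?_
        by_cases hgm : g m = 0
        · rw [hgm, zero_mul]
        · have hmT : m ∈ T := Finset.mem_filter.mpr ⟨hm, hgm⟩
          have : (n₀ : ℕ) ≤ (m : ℕ) := Subtype.coe_le_coe.mpr (T.min'_le m hmT)
          rw [if_neg (by omega), mul_zero]
      have hqne : q ≠ 0 := fun h0 => hgn₀ (by rw [← hlead, h0, map_zero])
      have hmem : (n₀ : ℕ) ∈ Γ := by
        have h5 := hord_mem ⟨q, hqO⟩ hqne
        have h6 : ord q = (n₀ : ℕ) := ord_eq_of (by rw [hlead]; exact hgn₀) hlow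
        rw [show ((⟨q, hqO⟩ : O) : PowerSeries ℂ) = q from rfl, h6] at h5
        exact h5
      exact n₀.2 hmem
    haveI : Finite ↥(Γᶜ : Set ℕ) := hli.finite_of_isNoetherian
    exact Set.toFinite _
  obtain ⟨cb, hcb⟩ := hScompl.bddAbove
  set c := cb + 1 with hcdef
  have hc1 : 1 ≤ c := by omega
  have hcΓ : ∀ n, c ≤ n → n ∈ Γ := by
    intro n hn
    by_contra hnn
    have := hcb (show n ∈ (Γᶜ : Set ℕ) from hnn)
    omega
  have hXc : (PowerSeries.X : PowerSeries ℂ) ^ c ∈ O := by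
    have hcc : c ∈ Γ := hcΓ c le_rfl
    have hτc : (τ c : PowerSeries ℂ) = PowerSeries.X ^ c := by
      apply PowerSeries.ext; intro n
      rw [PowerSeries.coeff_X_pow]
      rcases lt_trichotomy n c with h | h | h
      · rw [hτ2 c hcc n h, if_neg (by omega)]
      · rw [if_pos h, h]; exact hτ1 c hcc
      · rw [hτ3 c hcc n h (hcΓ n (by omega)), if_neg (by omega)]
    rw [← hτc]; exact (τ c).2
  obtain ⟨N, hN⟩ := conductorExists O hO c hc1 hXc
  have hjmem : ∀ lam, ∀ γ ∈ Γ, a lam + γ ∈ j := by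
    intro lam γ hγ
    rw [hj]
    exact Set.mem_iUnion.mpr ⟨lam, ⟨γ, hγ, rfl⟩⟩
  have hajj : ∀ lam, a lam ∈ j := fun lam => by simpa using hjmem lam 0 hΓ0
  have hJord : ∀ n ∈ j, ∃ u : O, u ∈ J ∧ (u : PowerSeries ℂ) ≠ 0 ∧ ord (u : PowerSeries ℂ) = n := by
    intro n hn
    rw [← hJ] at hn
    obtain ⟨u, huJ, hune, hordu⟩ := hn
    exact ⟨u, huJ, hune, hordu.symm⟩
  obtain ⟨u₀, hu₀J, hu₀ne, hu₀ord⟩ := hJord (a 0) (hajj 0)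
  set M := N + a 0 with hM
  have hMJ : ∀ x : PowerSeries ℂ, (∀ i < M, PowerSeries.coeff i x = 0) →
      ∃ hx : x ∈ O, (⟨x, hx⟩ : O) ∈ J := by
    intro x hx
    exact idealConductor O N hN J u₀ hu₀J hu₀ne x (by rw [hu₀ord]; exact hx)
  have hSigsub : ∀ lam, Sig lam ⊆ Set.Iio (a 0 + c) := by
    intro lam n hn
    rw [hSig lam] at hn
    by_contra hge
    simp only [Set.mem_Iio, not_lt] at hge
    apply hn.2.2
    have h1 := hjmem 0 (n - a 0) (hcΓ _ (by omega))
    rwa [Nat.add_sub_cancel' (by omega)] at h1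
  have hSigfin : ∀ lam, (Sig lam).Finite := fun lam => (Set.finite_Iio _).subset (hSigsub lam)
  have instSig : ∀ lam, Fintype ↥(Sig lam) := fun lam => (hSigfin lam).fintype
  have hSigall : ∀ lam (i : ↥(Sig lam)), (i : ℕ) ∈ Γ ∧ a lam < (i : ℕ) ∧ (i : ℕ) ∉ j := by
    intro lam i
    obtain ⟨v, hv⟩ := i
    have hv2 := hv
    rw [hSig lam] at hv2
    exact hv2
  have hSigΓ : ∀ lam (i : ↥(Sig lam)), (i : ℕ) ∈ Γ := fun lam i => (hSigall lam i).1
  have hSiga : ∀ lam (i : ↥(Sig lam)), a lam < (i : ℕ) := fun lam i => (hSigall lam i).2.1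
  have hSignj : ∀ lam (i : ↥(Sig lam)), (i : ℕ) ∉ j := fun lam i => (hSigall lam i).2.2
  -- reduction producing normalized generators
  have hred : ∀ lam (d n : ℕ), M ≤ n + d → ∀ h : O, h ∈ J →
      PowerSeries.coeff (a lam) (h : PowerSeries ℂ) = 1 →
      (∀ i < a lam, PowerSeries.coeff i (h : PowerSeries ℂ) = 0) →
      (∀ g ∈ j, a lam < g → g < n → PowerSeries.coeff g (h : PowerSeries ℂ) = 0) →
      ∃ f : O, f ∈ J ∧ PowerSeries.coeff (a lam) (f : PowerSeries ℂ) = 1 ∧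
        (∀ i < a lam, PowerSeries.coeff i (f : PowerSeries ℂ) = 0) ∧
        (∀ g ∈ j, a lam < g → PowerSeries.coeff g (f : PowerSeries ℂ) = 0) := by
    intro lam d
    induction d with
    | zero =>
      intro n hn h hh h1 h2 h3
      set cser : PowerSeries ℂ := PowerSeries.mk
        (fun g => if g ∈ j ∧ a lam < g then PowerSeries.coeff g (h : PowerSeries ℂ) else 0)
        with hcser
      have hc0 : ∀ i < M, PowerSeries.coeff i cser = 0 := by
        intro i hi
        rw [hcser, PowerSeries.coeff_mk]
        split_ifs with hcond
        · exact h3 i hcond.1 hcond.2 (by omega)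
        · rfl
      obtain ⟨hcO, hcJ⟩ := hMJ cser hc0
      have hcoe : ∀ i, PowerSeries.coeff i ((h - ⟨cser, hcO⟩ : O) : PowerSeries ℂ)
          = PowerSeries.coeff i (h : PowerSeries ℂ) - PowerSeries.coeff i cser := by
        intro i
        rw [AddSubgroupClass.coe_sub, map_sub]
      refine ⟨h - ⟨cser, hcO⟩, sub_mem hh hcJ, ?_, ?_, ?_⟩
      · rw [hcoe, hcser, PowerSeries.coeff_mk,
          if_neg (fun hcond => lt_irrefl _ hcond.2), h1, sub_zero]
      · intro i hi
        rw [hcoe, hcser, PowerSeries.coeff_mk,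
          if_neg (fun hcond => absurd hcond.2 (by omega)), h2 i hi, sub_zero]
      · intro g hg hag
        rw [hcoe, hcser, PowerSeries.coeff_mk, if_pos ⟨hg, hag⟩, sub_self]
    | succ d ih =>
      intro n hn h hh h1 h2 h3
      by_cases hMn : M ≤ n
      · exact ih n (by omega) h hh h1 h2 h3
      · by_cases hcase : n ∈ j ∧ a lam < n ∧ PowerSeries.coeff n (h : PowerSeries ℂ) ≠ 0
        · obtain ⟨hnj, hna, hcn⟩ := hcase
          obtain ⟨u, huJ, hune, huord⟩ := hJord n hnj
          have hcnu : PowerSeries.coeff n (u : PowerSeries ℂ) ≠ 0 := by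
            rw [← huord]; exact ord_coeff_ne_zero hune
          have hulow : ∀ i < n, PowerSeries.coeff i (u : PowerSeries ℂ) = 0 := by
            intro i hi
            exact coeff_eq_zero_of_lt_ord (by rw [huord]; exact hi)
          set z : ℂ := PowerSeries.coeff n (h : PowerSeries ℂ) / PowerSeries.coeff n (u : PowerSeries ℂ) with hz
          set q : O := h - algebraMap ℂ O z * u with hqdef
          have hqc : ∀ i, PowerSeries.coeff i (q : PowerSeries ℂ)
              = PowerSeries.coeff i (h : PowerSeries ℂ) - z * PowerSeries.coeff i (u : PowerSeries ℂ) := by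
            intro i
            rw [hqdef, AddSubgroupClass.coe_sub, map_sub,
              show ((algebraMap ℂ O z * u : O) : PowerSeries ℂ)
                = PowerSeries.C z * (u : PowerSeries ℂ) from rfl]
            simp
          refine ih (n + 1) (by omega) q (sub_mem hh (Ideal.mul_mem_left _ _ huJ)) ?_ ?_ ?_
          · rw [hqc, hulow (a lam) hna, mul_zero, sub_zero]; exact h1
          · intro i hi
            rw [hqc, hulow i (by omega), mul_zero, sub_zero]; exact h2 i hi
          · intro g hg hag hgn
            rcases Nat.lt_succ_iff_lt_or_eq.mp hgn with hlt | heq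
            · rw [hqc, hulow g hlt, mul_zero, sub_zero]; exact h3 g hg hag hlt
            · rw [heq, hqc, hz, div_mul_cancel₀ _ hcnu, sub_self]
        · push_neg at hcase
          refine ih (n + 1) (by omega) h hh h1 h2 ?_
          intro g hg hag hgn
          rcases Nat.lt_succ_iff_lt_or_eq.mp hgn with hlt | heq
          · exact h3 g hg hag hlt
          · rw [heq]; exact hcase (heq ▸ hg) (heq ▸ hag)
  have hFex : ∀ lam, ∃ f : O, f ∈ J ∧ PowerSeries.coeff (a lam) (f : PowerSeries ℂ) = 1 ∧
      (∀ i < a lam, PowerSeries.coeff i (f : PowerSeries ℂ) = 0) ∧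
      (∀ g ∈ j, a lam < g → PowerSeries.coeff g (f : PowerSeries ℂ) = 0) := by
    intro lam
    obtain ⟨u₁, hu₁J, hu₁ne, hu₁ord⟩ := hJord (a lam) (hajj lam)
    have hlead : PowerSeries.coeff (a lam) (u₁ : PowerSeries ℂ) ≠ 0 := by
      rw [← hu₁ord]; exact ord_coeff_ne_zero hu₁ne
    have hcoe : ∀ i, PowerSeries.coeff i
        ((algebraMap ℂ O (PowerSeries.coeff (a lam) (u₁ : PowerSeries ℂ))⁻¹ * u₁ : O) : PowerSeries ℂ)
        = (PowerSeries.coeff (a lam) (u₁ : PowerSeries ℂ))⁻¹ * PowerSeries.coeff i (u₁ : PowerSeries ℂ) := by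
      intro i
      rw [show ((algebraMap ℂ O (PowerSeries.coeff (a lam) (u₁ : PowerSeries ℂ))⁻¹ * u₁ : O) : PowerSeries ℂ)
          = PowerSeries.C (PowerSeries.coeff (a lam) (u₁ : PowerSeries ℂ))⁻¹ * (u₁ : PowerSeries ℂ) from rfl]
      simp
    refine hred lam M 0 (by omega)
      (algebraMap ℂ O (PowerSeries.coeff (a lam) (u₁ : PowerSeries ℂ))⁻¹ * u₁)
      (Ideal.mul_mem_left _ _ hu₁J) ?_ ?_ ?_
    · rw [hcoe]; exact inv_mul_cancel₀ hlead
    · intro i hi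
      rw [hcoe]
      have h9 : PowerSeries.coeff i (u₁ : PowerSeries ℂ) = 0 :=
        coeff_eq_zero_of_lt_ord (by rw [hu₁ord]; exact hi)
      rw [h9, mul_zero]
    · intro g hg hag hgn
      exact absurd hgn (Nat.not_lt_zero g)
  choose F hFJ hF1 hFlow hFj using hFex
  set s : (lam : Fin (k + 1)) → ↥(Sig lam) → ℂ :=
    fun lam i => PowerSeries.coeff (i : ℕ) (F lam : PowerSeries ℂ) with hsdef
  have hτcoeff : ∀ g ∈ Γ, ∀ γ ∈ Γ, PowerSeries.coeff γ (τ g : PowerSeries ℂ)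
      = if γ = g then 1 else 0 := by
    intro g hg γ hγ
    rcases lt_trichotomy γ g with h | h | h
    · rw [hτ2 g hg γ h, if_neg (by omega)]
    · rw [if_pos h, h]; exact hτ1 g hg
    · rw [hτ3 g hg γ h hγ, if_neg (by omega)]
  have hcombo : ∀ lam (t : ↥(Sig lam) → ℂ), ∀ γ ∈ Γ,
      PowerSeries.coeff γ ((τ (a lam) + ∑ᶠ i : ↥(Sig lam), t i • τ (i : ℕ) : O) : PowerSeries ℂ) =
        (if γ = a lam then 1 else 0) + (if hγS : γ ∈ Sig lam then t ⟨γ, hγS⟩ else 0) := by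
    intro lam t γ hγ
    letI := instSig lam
    rw [finsum_eq_sum_of_fintype]
    rw [show ((τ (a lam) + ∑ i : ↥(Sig lam), t i • τ (i : ℕ) : O) : PowerSeries ℂ)
        = (τ (a lam) : PowerSeries ℂ) + ((∑ i : ↥(Sig lam), t i • τ (i : ℕ) : O) : PowerSeries ℂ) from rfl]
    rw [map_add]
    congr 1
    · exact hτcoeff (a lam) (ha lam) γ hγ
    · rw [AddSubmonoidClass.coe_finset_sum, map_sum]
      rw [Finset.sum_congr rfl (fun i (_ : i ∈ Finset.univ) => by
        rw [show ((t i • τ (i : ℕ) : O) : PowerSeries ℂ) = t i • (τ (i : ℕ) : PowerSeries ℂ) from rfl,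
          map_smul, smul_eq_mul, hτcoeff _ (hSigΓ lam i) γ hγ])]
      by_cases hγS : γ ∈ Sig lam
      · rw [dif_pos hγS, Finset.sum_eq_single (⟨γ, hγS⟩ : ↥(Sig lam))]
        · rw [if_pos rfl, mul_one]
        · intro b _ hb
          rw [if_neg (fun hc => hb (Subtype.ext hc.symm)), mul_zero]
        · intro habs; exact absurd (Finset.mem_univ _) habs
      · rw [dif_neg hγS]
        refine Finset.sum_eq_zero fun i _ => ?_
        rw [if_neg (fun hc => hγS (by rw [hc]; exact i.2)), mul_zero]
  have hFeq : ∀ lam, F lam = τ (a lam) + ∑ᶠ i : ↥(Sig lam), s lam i • τ (i : ℕ) := by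
    intro lam
    apply hOinj
    intro γ hγ
    rw [hcombo lam (s lam) γ hγ]
    by_cases hγa : γ = a lam
    · rw [if_pos hγa]
      have hnotS : γ ∉ Sig lam := by
        intro hγS
        have h8 : a lam < γ := hSiga lam ⟨γ, hγS⟩
        omega
      rw [dif_neg hnotS, add_zero, hγa]
      exact hF1 lam
    · rw [if_neg hγa]
      by_cases hγS : γ ∈ Sig lam
      · rw [dif_pos hγS, zero_add]
      · rw [dif_neg hγS, add_zero]
        have hdisj : ¬(a lam < γ) ∨ γ ∈ j := by
          by_contra hcon
          push_neg at hcon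
          exact hγS (by rw [hSig lam]; exact ⟨hγ, hcon.1, hcon.2⟩)
        rcases lt_trichotomy γ (a lam) with h | h | h
        · exact hFlow lam γ h
        · exact absurd h hγa
        · rcases hdisj with hle | hγj
          · exact absurd h hle
          · exact hFj lam γ hγj h
  set I := Ideal.span (Set.range fun lam =>
      τ (a lam) + ∑ᶠ i : (Sig lam), s lam i • τ (i : ℕ)) with hIdef
  have hIle : I ≤ J := by
    rw [hIdef, Ideal.span_le]
    rintro _ ⟨lam, rfl⟩
    show (τ (a lam) + ∑ᶠ i : ↥(Sig lam), s lam i • τ (i : ℕ)) ∈ J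
    rw [← hFeq lam]
    exact hFJ lam
  have hFI : ∀ lam, F lam ∈ I := by
    intro lam
    rw [hFeq lam, hIdef]
    exact Ideal.subset_span ⟨lam, rfl⟩
  have hF0ne : ((F 0 : O) : PowerSeries ℂ) ≠ 0 := by
    intro h0
    have : (1 : ℂ) = 0 := by rw [← hF1 0, h0, map_zero]
    exact one_ne_zero this
  have hF0ord : ord ((F 0 : O) : PowerSeries ℂ) = a 0 :=
    ord_eq_of (by rw [hF1 0]; exact one_ne_zero) (hFlow 0)
  have hMI : ∀ x : PowerSeries ℂ, (∀ i < M, PowerSeries.coeff i x = 0) →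
      ∃ hx : x ∈ O, (⟨x, hx⟩ : O) ∈ I := by
    intro x hx
    exact idealConductor O N hN I (F 0) (hFI 0) hF0ne x (by rw [hF0ord]; exact hx)
  have hred2 : ∀ (d n : ℕ), M ≤ n + d → ∀ h : O, h ∈ J →
      (∀ i < n, PowerSeries.coeff i (h : PowerSeries ℂ) = 0) → h ∈ I := by
    intro d
    induction d with
    | zero =>
      intro n hn h hh hlow
      obtain ⟨hxO, hxI⟩ := hMI (h : PowerSeries ℂ) (fun i hi => hlow i (by omega))
      have heq : (⟨(h : PowerSeries ℂ), hxO⟩ : O) = h := Subtype.ext rfl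
      rwa [heq] at hxI
    | succ d ih =>
      intro n hn h hh hlow
      by_cases hMn : M ≤ n
      · obtain ⟨hxO, hxI⟩ := hMI (h : PowerSeries ℂ) (fun i hi => hlow i (by omega))
        have heq : (⟨(h : PowerSeries ℂ), hxO⟩ : O) = h := Subtype.ext rfl
        rwa [heq] at hxI
      · by_cases hzero : (h : PowerSeries ℂ) = 0
        · have : h = 0 := Subtype.ext hzero
          rw [this]; exact zero_mem I
        · by_cases hcn : PowerSeries.coeff n (h : PowerSeries ℂ) = 0
          · refine ih (n + 1) (by omega) h hh fun i hi => ?_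
            rcases Nat.lt_succ_iff_lt_or_eq.mp hi with h' | h'
            · exact hlow i h'
            · rw [h']; exact hcn
          · have hordh : ord (h : PowerSeries ℂ) = n := ord_eq_of hcn hlow
            have hnj : n ∈ j := by rw [← hJ]; exact ⟨h, hh, hzero, hordh.symm⟩
            have hnj' := hnj
            rw [hj] at hnj'
            obtain ⟨lam, hmem⟩ := Set.mem_iUnion.mp hnj'
            obtain ⟨γ, hγΓ, hγeq0⟩ := hmem
            have hγeq : a lam + γ = n := hγeq0
            set u : O := F lam * τ γ with hudef
            have huI : u ∈ I := Ideal.mul_mem_right _ _ (hFI lam)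
            have hucoe : ((u : O) : PowerSeries ℂ)
                = (F lam : PowerSeries ℂ) * (τ γ : PowerSeries ℂ) := rfl
            have hulead : PowerSeries.coeff n (u : PowerSeries ℂ) = 1 := by
              rw [hucoe, ← hγeq, coeff_mul_add_of (hFlow lam) (hτ2 γ hγΓ), hF1 lam, hτ1 γ hγΓ,
                one_mul]
            have hulow : ∀ i < n, PowerSeries.coeff i (u : PowerSeries ℂ) = 0 := by
              intro i hi
              rw [hucoe]
              exact coeff_mul_of_lt (hFlow lam) (hτ2 γ hγΓ) (by omega)
            set q : O := h - algebraMap ℂ O (PowerSeries.coeff n (h : PowerSeries ℂ)) * u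
              with hqdef
            have hqc : ∀ i, PowerSeries.coeff i (q : PowerSeries ℂ)
                = PowerSeries.coeff i (h : PowerSeries ℂ)
                  - PowerSeries.coeff n (h : PowerSeries ℂ) * PowerSeries.coeff i (u : PowerSeries ℂ) := by
              intro i
              rw [hqdef, AddSubgroupClass.coe_sub, map_sub,
                show ((algebraMap ℂ O (PowerSeries.coeff n (h : PowerSeries ℂ)) * u : O) : PowerSeries ℂ)
                  = PowerSeries.C (PowerSeries.coeff n (h : PowerSeries ℂ)) * (u : PowerSeries ℂ)
                  from rfl]
              simp
            have hqJ : q ∈ J := sub_mem hh (Ideal.mul_mem_left _ _ (hIle huI))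
            have hqI : q ∈ I := by
              refine ih (n + 1) (by omega) q hqJ fun i hi => ?_
              rcases Nat.lt_succ_iff_lt_or_eq.mp hi with h' | h'
              · rw [hqc, hlow i h', hulow i h', mul_zero, sub_zero]
              · rw [h', hqc, hulead, mul_one, sub_self]
            have hback : h = q + algebraMap ℂ O (PowerSeries.coeff n (h : PowerSeries ℂ)) * u := by
              rw [hqdef]; ring
            rw [hback]
            exact add_mem hqI (Ideal.mul_mem_left _ _ huI)
  have hJeq : J = I :=
    le_antisymm (fun h hh => hred2 M 0 (by omega) h hh (fun i hi => absurd hi (Nat.not_lt_zero i)))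
      hIle
  refine ⟨s, hJeq, ?_⟩
  intro s' hs'
  funext lam
  by_contra hne
  have hex : ∃ i : ↥(Sig lam), s' lam i ≠ s lam i := by
    by_contra hno
    push_neg at hno
    exact hne (funext hno)
  letI := instSig lam
  set T := Finset.univ.filter (fun i : ↥(Sig lam) => s' lam i ≠ s lam i) with hT
  have hTne : T.Nonempty := by
    obtain ⟨i, hi⟩ := hex
    exact ⟨i, Finset.mem_filter.mpr ⟨Finset.mem_univ i, hi⟩⟩
  set Tv := T.image (fun i : ↥(Sig lam) => (i : ℕ)) with hTv
  have hTvne : Tv.Nonempty := hTne.image _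
  set n₀ := Tv.min' hTvne with hn₀
  obtain ⟨i₀, hi₀T, hi₀v⟩ := Finset.mem_image.mp (Tv.min'_mem hTvne)
  rw [← hn₀] at hi₀v
  have hi₀ne : s' lam i₀ ≠ s lam i₀ := (Finset.mem_filter.mp hi₀T).2
  set dd : O := (τ (a lam) + ∑ᶠ i : ↥(Sig lam), s' lam i • τ (i : ℕ))
    - (τ (a lam) + ∑ᶠ i : ↥(Sig lam), s lam i • τ (i : ℕ)) with hdd
  have hddJ : dd ∈ J := by
    refine sub_mem ?_ ?_
    · rw [hs']; exact Ideal.subset_span ⟨lam, rfl⟩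
    · rw [hJeq, hIdef]; exact Ideal.subset_span ⟨lam, rfl⟩
  have hddc : ∀ m, PowerSeries.coeff m (dd : PowerSeries ℂ)
      = ∑ i : ↥(Sig lam), (s' lam i - s lam i) * PowerSeries.coeff m (τ (i : ℕ) : PowerSeries ℂ) := by
    intro m
    rw [hdd, finsum_eq_sum_of_fintype, finsum_eq_sum_of_fintype, AddSubgroupClass.coe_sub, map_sub]
    rw [show ((τ (a lam) + ∑ i : ↥(Sig lam), s' lam i • τ (i : ℕ) : O) : PowerSeries ℂ)
        = (τ (a lam) : PowerSeries ℂ) + ((∑ i : ↥(Sig lam), s' lam i • τ (i : ℕ) : O) : PowerSeries ℂ) from rfl,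
      show ((τ (a lam) + ∑ i : ↥(Sig lam), s lam i • τ (i : ℕ) : O) : PowerSeries ℂ)
        = (τ (a lam) : PowerSeries ℂ) + ((∑ i : ↥(Sig lam), s lam i • τ (i : ℕ) : O) : PowerSeries ℂ) from rfl]
    rw [map_add, map_add, AddSubmonoidClass.coe_finset_sum, AddSubmonoidClass.coe_finset_sum,
      map_sum, map_sum]
    have hterm : ∀ (tt : ↥(Sig lam) → ℂ) (i : ↥(Sig lam)),
        PowerSeries.coeff m ((tt i • τ (i : ℕ) : O) : PowerSeries ℂ)
          = tt i * PowerSeries.coeff m (τ (i : ℕ) : PowerSeries ℂ) := by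
      intro tt i
      rw [show ((tt i • τ (i : ℕ) : O) : PowerSeries ℂ) = tt i • (τ (i : ℕ) : PowerSeries ℂ) from rfl,
        map_smul, smul_eq_mul]
    rw [Finset.sum_congr rfl (fun i _ => hterm (s' lam) i),
      Finset.sum_congr rfl (fun i _ => hterm (s lam) i)]
    rw [show (∑ i : ↥(Sig lam), (s' lam i - s lam i) * PowerSeries.coeff m (τ (i : ℕ) : PowerSeries ℂ))
        = ∑ i : ↥(Sig lam), (s' lam i * PowerSeries.coeff m (τ (i : ℕ) : PowerSeries ℂ)
            - s lam i * PowerSeries.coeff m (τ (i : ℕ) : PowerSeries ℂ))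
        from Finset.sum_congr rfl (fun i _ => by ring), Finset.sum_sub_distrib]
    ring
  have hlowdd : ∀ m < n₀, PowerSeries.coeff m (dd : PowerSeries ℂ) = 0 := by
    intro m hm
    rw [hddc]
    refine Finset.sum_eq_zero fun i _ => ?_
    by_cases hiT : s' lam i = s lam i
    · rw [hiT, sub_self, zero_mul]
    · have hiTm : i ∈ T := Finset.mem_filter.mpr ⟨Finset.mem_univ i, hiT⟩
      have hle : n₀ ≤ (i : ℕ) := Tv.min'_le _ (Finset.mem_image_of_mem _ hiTm)
      rw [hτ2 _ (hSigΓ lam i) m (by omega), mul_zero]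
  have hn₀c : PowerSeries.coeff n₀ (dd : PowerSeries ℂ) = s' lam i₀ - s lam i₀ := by
    rw [hddc, Finset.sum_eq_single i₀]
    · rw [← hi₀v, hτ1 _ (hSigΓ lam i₀), mul_one]
    · intro b _ hb
      by_cases hbT : s' lam b = s lam b
      · rw [hbT, sub_self, zero_mul]
      · have hbTm : b ∈ T := Finset.mem_filter.mpr ⟨Finset.mem_univ b, hbT⟩
        have hle : n₀ ≤ (b : ℕ) := Tv.min'_le _ (Finset.mem_image_of_mem _ hbTm)
        have hne2 : n₀ ≠ (b : ℕ) := fun hc =>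
          hb (Subtype.ext (show (b : ℕ) = (i₀ : ℕ) by rw [← hc, hi₀v]))
        rw [hτ2 _ (hSigΓ lam b) n₀ (by omega), mul_zero]
    · intro habs; exact absurd (Finset.mem_univ _) habs
  have hddne : (dd : PowerSeries ℂ) ≠ 0 := fun h0 => by
    have := hn₀c
    rw [h0, map_zero] at this
    exact hi₀ne (sub_eq_zero.mp this.symm)
  have hdord : ord (dd : PowerSeries ℂ) = n₀ :=
    ord_eq_of (by rw [hn₀c]; exact sub_ne_zero.mpr hi₀ne) hlowdd
  have hn₀j : n₀ ∈ j := by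
    rw [← hJ]
    exact ⟨dd, hddJ, hddne, hdord.symm⟩
  exact hSignj lam i₀ (hi₀v ▸ hn₀j)
end

section
/- Let k and n be coprime positive integers and let Γ = {ak + bn : a, b ∈ ℕ}. Let S be the set of functions φ : {0, …, k−1} → ℕ satisfying φ(k−1) ≤ φ(k−2) ≤ ⋯ ≤ φ(0) ≤ φ(k−1) + n. Then the map φ ↦ Δ_φ = {αk + βn : 0 ≤ β ≤ k−1, α ∈ ℕ, α ≥ φ(β)} is a bijection from S onto the set of semigroup ideals of Γ, and for every φ ∈ S the colength of Δ_φ equals φ(0) + φ(1) + ⋯ + φ(k−1). -/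
/-- For coprime positive `k, n` and `Γ = ⟨k,n⟩`, the staircase map `φ ↦ Δ_φ` is a
bijection from the set `S` of functions `φ : {0,…,k−1} → ℕ` with
`φ(k−1) ≤ ⋯ ≤ φ(0) ≤ φ(k−1) + n` onto the set of semigroup ideals of `Γ`, and the
colength of `Δ_φ` is `Σ_β φ(β)`. -/
theorem staircase_bijection (k n : ℕ) (hk : 0 < k) (hn : 0 < n)
    (hkn : Nat.Coprime k n)
    (Γ : Set ℕ) (hΓ : Γ = {m : ℕ | ∃ a b : ℕ, m = a * k + b * n})
    (S : Set (Fin k → ℕ))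
    (hS : S = {φ : Fin k → ℕ |
      (∀ i : Fin k, ∀ h : (i : ℕ) + 1 < k, φ ⟨(i : ℕ) + 1, h⟩ ≤ φ i) ∧
      φ ⟨0, hk⟩ ≤ φ ⟨k - 1, Nat.sub_lt hk one_pos⟩ + n}) :
    Set.BijOn
      (fun φ : Fin k → ℕ =>
        {m : ℕ | ∃ β : Fin k, ∃ α : ℕ, φ β ≤ α ∧ m = α * k + (β : ℕ) * n})
      S
      {Δ : Set ℕ | Δ.Nonempty ∧ Δ ⊆ Γ ∧ ∀ δ ∈ Δ, ∀ γ ∈ Γ, δ + γ ∈ Δ} ∧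
    ∀ φ ∈ S,
      (Γ \ {m : ℕ | ∃ β : Fin k, ∃ α : ℕ, φ β ≤ α ∧ m = α * k + (β : ℕ) * n}).ncard =
        ∑ β : Fin k, φ β := by
  subst hΓ hS
  -- uniqueness of the canonical representation
  have uniq : ∀ α β α' β' : ℕ, β < k → β' < k →
      α * k + β * n = α' * k + β' * n → α = α' ∧ β = β' := by
    intro α β α' β' hβ hβ' h
    have h' : β * n + α * k = β' * n + α' * k := by omega
    have hmod : β * n % k = β' * n % k := by
      have := congrArg (· % k) h'
      simpa [Nat.add_mul_mod_self_right] using this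
    have hβeq : β = β' := by
      have := Nat.ModEq.cancel_right_of_coprime (by simpa [Nat.Coprime] using hkn)
        (hmod : β * n ≡ β' * n [MOD k])
      have h2 : β % k = β' % k := this
      rwa [Nat.mod_eq_of_lt hβ, Nat.mod_eq_of_lt hβ'] at h2
    subst hβeq
    refine ⟨?_, rfl⟩
    have : α * k = α' * k := by omega
    exact Nat.eq_of_mul_eq_mul_right hk this
  -- canonical form
  have canon : ∀ a b : ℕ, a * k + b * n = (a + b / k * n) * k + b % k * n := by
    intro a b
    conv_lhs => rw [← Nat.div_add_mod b k]
    ring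
  -- antitonicity from successive decrease
  have anti : ∀ φ : Fin k → ℕ,
      (∀ i : Fin k, ∀ h : (i : ℕ) + 1 < k, φ ⟨(i : ℕ) + 1, h⟩ ≤ φ i) →
      ∀ m (hm : m < k) (i : Fin k), (i : ℕ) ≤ m → φ ⟨m, hm⟩ ≤ φ i := by
    intro φ hφ m
    induction m with
    | zero =>
      intro hm i hi
      have : i = ⟨0, hm⟩ := Fin.ext (Nat.le_zero.mp hi)
      rw [this]
    | succ m ih =>
      intro hm i hi
      rcases Nat.lt_or_ge (i : ℕ) (m + 1) with h | h
      · have hmk : m < k := by omega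
        exact le_trans (hφ ⟨m, hmk⟩ hm) (ih hmk i (by omega))
      · have : i = ⟨m + 1, hm⟩ := Fin.ext (le_antisymm hi h)
        rw [this]
  refine ⟨⟨?_, ?_, ?_⟩, ?_⟩
  -- MapsTo
  · intro φ hφ
    obtain ⟨hmono, hwrap⟩ := hφ
    refine ⟨⟨φ ⟨0, hk⟩ * k + ((⟨0, hk⟩ : Fin k) : ℕ) * n,
      ⟨⟨0, hk⟩, φ ⟨0, hk⟩, le_refl _, rfl⟩⟩, ?_, ?_⟩
    · rintro m ⟨β, α, _, rfl⟩
      exact ⟨α, (β : ℕ), rfl⟩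
    · rintro δ ⟨β, α, hα, rfl⟩ γ ⟨a, b, rfl⟩
      have hkey : α * k + (β : ℕ) * n + (a * k + b * n)
          = (α + a + ((β : ℕ) + b) / k * n) * k + ((β : ℕ) + b) % k * n := by
        calc α * k + (β : ℕ) * n + (a * k + b * n)
            = (α + a) * k + ((β : ℕ) + b) * n := by ring
        _ = _ := canon (α + a) ((β : ℕ) + b)
      refine ⟨⟨((β : ℕ) + b) % k, Nat.mod_lt _ hk⟩, α + a + ((β : ℕ) + b) / k * n, ?_, hkey⟩
      rcases Nat.eq_zero_or_pos (((β : ℕ) + b) / k) with hq | hq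
      · have h1 := Nat.div_add_mod ((β : ℕ) + b) k
        rw [hq] at h1
        have hmod : ((β : ℕ) + b) % k = (β : ℕ) + b := by omega
        have h2 := anti φ hmono (((β : ℕ) + b) % k) (Nat.mod_lt _ hk) β (by omega)
        rw [hq]
        simpa using le_trans h2 (by omega)
      · have h1 := anti φ hmono (((β : ℕ) + b) % k) (Nat.mod_lt _ hk) ⟨0, hk⟩ (Nat.zero_le _)
        have h3 := anti φ hmono (k - 1) (Nat.sub_lt hk one_pos) β (by
          have := β.isLt; omega)
        have h4 : n ≤ ((β : ℕ) + b) / k * n := Nat.le_mul_of_pos_left n hq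
        calc φ ⟨((β : ℕ) + b) % k, Nat.mod_lt _ hk⟩ ≤ φ ⟨0, hk⟩ := h1
        _ ≤ φ ⟨k - 1, Nat.sub_lt hk one_pos⟩ + n := hwrap
        _ ≤ φ β + n := by omega
        _ ≤ α + a + ((β : ℕ) + b) / k * n := by omega
  -- InjOn
  · intro φ hφ ψ hψ h
    have h' : {m : ℕ | ∃ β : Fin k, ∃ α : ℕ, φ β ≤ α ∧ m = α * k + (β : ℕ) * n}
        = {m : ℕ | ∃ β : Fin k, ∃ α : ℕ, ψ β ≤ α ∧ m = α * k + (β : ℕ) * n} := h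
    have step : ∀ χ ξ : Fin k → ℕ,
        {m : ℕ | ∃ β : Fin k, ∃ α : ℕ, χ β ≤ α ∧ m = α * k + (β : ℕ) * n}
          = {m : ℕ | ∃ β : Fin k, ∃ α : ℕ, ξ β ≤ α ∧ m = α * k + (β : ℕ) * n} →
        ∀ β : Fin k, ξ β ≤ χ β := by
      intro χ ξ hχξ β
      have hm : χ β * k + (β : ℕ) * n
          ∈ {m : ℕ | ∃ β : Fin k, ∃ α : ℕ, χ β ≤ α ∧ m = α * k + (β : ℕ) * n} :=
        ⟨β, χ β, le_refl _, rfl⟩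
      rw [hχξ] at hm
      obtain ⟨b, a, hle, heq⟩ := hm
      obtain ⟨h1, h2⟩ := uniq (χ β) (β : ℕ) a (b : ℕ) β.isLt b.isLt heq
      have hb : b = β := Fin.ext h2.symm
      subst hb
      omega
    funext β
    exact le_antisymm (step ψ φ h'.symm β) (step φ ψ h' β)
  -- SurjOn
  · intro Δ hΔ
    obtain ⟨⟨δ0, hδ0⟩, hsub, hclose⟩ := hΔ
    have hA : ∀ β : Fin k, ∃ α : ℕ, α * k + (β : ℕ) * n ∈ Δ := by
      intro β
      obtain ⟨a, b, hab⟩ := hsub hδ0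
      set c := (β : ℕ) + (k - b % k) with hc
      have hmemc : δ0 + c * n ∈ Δ := hclose δ0 hδ0 (c * n) ⟨0, c, by ring⟩
      have h1 : b % k + k * (b / k) = b := Nat.mod_add_div b k
      have h2 : b % k < k := Nat.mod_lt b hk
      have hdist : k * (b / k + 1) = k * (b / k) + k := by ring
      have h3 : b + c = k * (b / k + 1) + (β : ℕ) := by omega
      have h4 : (b + c) % k = (β : ℕ) := by
        rw [h3, Nat.mul_add_mod, Nat.mod_eq_of_lt β.isLt]
      refine ⟨a + (b + c) / k * n, ?_⟩
      have h5 : δ0 + c * n = (a + (b + c) / k * n) * k + (b + c) % k * n := by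
        calc δ0 + c * n = a * k + (b + c) * n := by rw [hab]; ring
        _ = _ := canon a (b + c)
      rw [h4] at h5
      rwa [h5] at hmemc
    set φ : Fin k → ℕ := fun β => sInf {α | α * k + (β : ℕ) * n ∈ Δ} with hφdef
    have hmem : ∀ β : Fin k, φ β * k + (β : ℕ) * n ∈ Δ := by
      intro β
      have : sInf {α | α * k + (β : ℕ) * n ∈ Δ} ∈ {α | α * k + (β : ℕ) * n ∈ Δ} :=
        Nat.sInf_mem (hA β)
      exact this
    have hmin : ∀ (β : Fin k) (α : ℕ), α * k + (β : ℕ) * n ∈ Δ → φ β ≤ α :=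
      fun β α h => Nat.sInf_le h
    have hsub1 : ∀ m ∈ Δ, ∃ β : Fin k, ∃ α, φ β ≤ α ∧ m = α * k + (β : ℕ) * n := by
      intro m hm
      obtain ⟨a, b, hab⟩ := hsub hm
      have hc := canon a b
      refine ⟨⟨b % k, Nat.mod_lt b hk⟩, a + b / k * n, ?_, by rw [hab]; exact hc⟩
      refine hmin ⟨b % k, Nat.mod_lt b hk⟩ (a + b / k * n) ?_
      show (a + b / k * n) * k + b % k * n ∈ Δ
      rw [← hc, ← hab]
      exact hm
    have hsub2 : ∀ (β : Fin k) (α : ℕ), φ β ≤ α → α * k + (β : ℕ) * n ∈ Δ := by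
      intro β α hle
      have hadd : φ β + (α - φ β) = α := by omega
      have heq : α * k + (β : ℕ) * n = (φ β * k + (β : ℕ) * n) + ((α - φ β) * k + 0 * n) := by
        calc α * k + (β : ℕ) * n = (φ β + (α - φ β)) * k + (β : ℕ) * n := by rw [hadd]
        _ = _ := by ring
      rw [heq]
      exact hclose _ (hmem β) _ ⟨α - φ β, 0, rfl⟩
    have hφS : (∀ i : Fin k, ∀ h : (i : ℕ) + 1 < k, φ ⟨(i : ℕ) + 1, h⟩ ≤ φ i) ∧
        φ ⟨0, hk⟩ ≤ φ ⟨k - 1, Nat.sub_lt hk one_pos⟩ + n := by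
      constructor
      · intro i h
        refine hmin ⟨(i : ℕ) + 1, h⟩ (φ i) ?_
        show φ i * k + ((i : ℕ) + 1) * n ∈ Δ
        have heq : φ i * k + ((i : ℕ) + 1) * n = (φ i * k + (i : ℕ) * n) + (0 * k + 1 * n) := by
          ring
        rw [heq]
        exact hclose _ (hmem i) _ ⟨0, 1, rfl⟩
      · refine hmin ⟨0, hk⟩ (φ ⟨k - 1, Nat.sub_lt hk one_pos⟩ + n) ?_
        show (φ ⟨k - 1, Nat.sub_lt hk one_pos⟩ + n) * k + 0 * n ∈ Δ
        have hmem2 := hclose _ (hmem ⟨k - 1, Nat.sub_lt hk one_pos⟩) (0 * k + 1 * n) ⟨0, 1, rfl⟩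
        have h1 : k - 1 + 1 = k := by omega
        have heq : (φ ⟨k - 1, Nat.sub_lt hk one_pos⟩ + n) * k + 0 * n
            = φ ⟨k - 1, Nat.sub_lt hk one_pos⟩ * k
              + ((⟨k - 1, Nat.sub_lt hk one_pos⟩ : Fin k) : ℕ) * n + (0 * k + 1 * n) := by
          show _ = φ ⟨k - 1, Nat.sub_lt hk one_pos⟩ * k + (k - 1) * n + (0 * k + 1 * n)
          calc (φ ⟨k - 1, Nat.sub_lt hk one_pos⟩ + n) * k + 0 * n
              = φ ⟨k - 1, Nat.sub_lt hk one_pos⟩ * k + (k - 1 + 1) * n := by rw [h1]; ring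
          _ = _ := by ring
        rw [heq]
        exact hmem2
    refine ⟨φ, hφS, ?_⟩
    ext m
    simp only [Set.mem_setOf_eq]
    constructor
    · rintro ⟨β, α, hle, rfl⟩
      exact hsub2 β α hle
    · intro hm
      exact hsub1 m hm
  -- colength
  · intro φ hφ
    classical
    set F : Finset ℕ :=
      (Finset.univ.sigma fun β : Fin k => Finset.range (φ β)).image
        (fun p : (_ : Fin k) × ℕ => p.2 * k + (p.1 : ℕ) * n) with hF
    have hset : {m : ℕ | ∃ a b : ℕ, m = a * k + b * n}
        \ {m : ℕ | ∃ β : Fin k, ∃ α : ℕ, φ β ≤ α ∧ m = α * k + (β : ℕ) * n} = ↑F := by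
      ext m
      simp only [hF, Set.mem_diff, Set.mem_setOf_eq, Finset.coe_image, Set.mem_image,
        Finset.mem_coe, Finset.mem_sigma, Finset.mem_univ, Finset.mem_range, true_and]
      constructor
      · rintro ⟨⟨a, b, rfl⟩, hnot⟩
        have hc := canon a b
        rcases Nat.lt_or_ge (a + b / k * n) (φ ⟨b % k, Nat.mod_lt b hk⟩) with hlt | hge
        · exact ⟨⟨⟨b % k, Nat.mod_lt b hk⟩, a + b / k * n⟩, hlt, hc.symm⟩
        · exact absurd ⟨⟨b % k, Nat.mod_lt b hk⟩, a + b / k * n, hge, hc⟩ hnot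
      · rintro ⟨⟨β, α⟩, hlt, rfl⟩
        have hlt' : α < φ β := hlt
        refine ⟨⟨α, (β : ℕ), rfl⟩, ?_⟩
        rintro ⟨β', α', hle, heq⟩
        obtain ⟨h1, h2⟩ := uniq α' (β' : ℕ) α (β : ℕ) β'.isLt β.isLt heq.symm
        have hb : β' = β := Fin.ext h2
        subst hb
        omega
    rw [hset, Set.ncard_coe_finset, hF, Finset.card_image_of_injOn, Finset.card_sigma]
    · simp
    · rintro ⟨β, α⟩ hp ⟨β', α'⟩ hq hpq
      obtain ⟨h1, h2⟩ := uniq α (β : ℕ) α' (β' : ℕ) β.isLt β'.isLt hpq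
      have hb : β = β' := Fin.ext h2
      subst hb
      subst h1
      rfl
end

section
/- Let k and n be coprime positive integers, let Γ = {ak + bn : a, b ∈ ℕ}, and let φ : {0, …, k−1} → ℕ satisfy φ(k−1) ≤ φ(k−2) ≤ ⋯ ≤ φ(0) ≤ φ(k−1) + n. Let Δ_φ = {αk + βn : 0 ≤ β ≤ k−1, α ∈ ℕ, α ≥ φ(β)}. Then the minimal number of generators m(Δ_φ) of the semigroup ideal Δ_φ equals the number of strict inequalities among the k inequalities φ(k−1) ≤ φ(k−2), φ(k−2) ≤ φ(k−3), …, φ(1) ≤ φ(0), φ(0) ≤ φ(k−1) + n. -/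
/-- The minimal number of generators of a semigroup ideal `Δ` of a numerical semigroup
`Γ ⊆ ℕ`: the least `r` such that `Δ = (a₁ + Γ) ∪ ⋯ ∪ (a_r + Γ)` for some `a_j ∈ Δ`. -/
noncomputable def semigroupIdealMinGens (Γ Δ : Set ℕ) : ℕ :=
  sInf {r : ℕ | ∃ a : Fin r → ℕ, (∀ j, a j ∈ Δ) ∧ Δ = ⋃ j, ((a j + ·) '' Γ)}

lemma rep_unique {k n : ℕ} (hk : 0 < k) (hkn : Nat.Coprime k n)
    {α β α' β' : ℕ} (hβ : β < k) (hβ' : β' < k)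
    (h : α * k + β * n = α' * k + β' * n) : β = β' ∧ α = α' := by
  have hmod : β * n % k = β' * n % k := by
    have h2 : (β * n + α * k) % k = (β' * n + α' * k) % k := by
      rw [show β * n + α * k = α * k + β * n from by ring,
          show β' * n + α' * k = α' * k + β' * n from by ring, h]
    simpa [Nat.add_mul_mod_self_right] using h2
  have hbb : β = β' := by
    have h3 : β ≡ β' [MOD k] :=
      Nat.ModEq.cancel_right_of_coprime (c := n) hkn hmod
    have h1 : β % k = β' % k := h3
    rwa [Nat.mod_eq_of_lt hβ, Nat.mod_eq_of_lt hβ'] at h1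
  subst hbb
  refine ⟨rfl, Nat.eq_of_mul_eq_mul_right hk (by omega)⟩

/-- For coprime positive `k, n`, `Γ = ⟨k,n⟩` and a staircase `φ` with
`φ(k−1) ≤ ⋯ ≤ φ(0) ≤ φ(k−1) + n`, the minimal number of generators of the semigroup
ideal `Δ_φ` equals the number of strict inequalities among the `k` inequalities
`φ(k−1) ≤ φ(k−2), …, φ(1) ≤ φ(0), φ(0) ≤ φ(k−1) + n`. -/
theorem minGens_eq_strict_steps (k n : ℕ) (hk : 0 < k) (hn : 0 < n)
    (hkn : Nat.Coprime k n)
    (Γ : Set ℕ) (hΓ : Γ = {m : ℕ | ∃ a b : ℕ, m = a * k + b * n})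
    (φ : Fin k → ℕ)
    (hchain : ∀ i : Fin k, ∀ h : (i : ℕ) + 1 < k, φ ⟨(i : ℕ) + 1, h⟩ ≤ φ i)
    (hwrap : φ ⟨0, hk⟩ ≤ φ ⟨k - 1, Nat.sub_lt hk one_pos⟩ + n) :
    semigroupIdealMinGens Γ
        {m : ℕ | ∃ β : Fin k, ∃ α : ℕ, φ β ≤ α ∧ m = α * k + (β : ℕ) * n} =
      Set.ncard {i : Fin k |
        if h : (i : ℕ) + 1 < k then φ ⟨(i : ℕ) + 1, h⟩ < φ i
        else φ ⟨0, hk⟩ < φ i + n} := by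
  subst hΓ
  set Δ : Set ℕ := {m : ℕ | ∃ β : Fin k, ∃ α : ℕ, φ β ≤ α ∧ m = α * k + (β : ℕ) * n}
    with hΔdef
  set S : Set (Fin k) := {i : Fin k |
        if h : (i : ℕ) + 1 < k then φ ⟨(i : ℕ) + 1, h⟩ < φ i
        else φ ⟨0, hk⟩ < φ i + n} with hSdef
  set Γ : Set ℕ := {m : ℕ | ∃ a b : ℕ, m = a * k + b * n} with hΓdef
  set g : Fin k → ℕ := fun β => φ β * k + (β : ℕ) * n with hgdef
  set σ : Fin k → Fin k :=
    fun i => if h : (i : ℕ) + 1 < k then ⟨(i : ℕ) + 1, h⟩ else ⟨0, hk⟩ with hσdef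
  -- basic membership facts
  have h_gΔ : ∀ β : Fin k, g β ∈ Δ := fun β => ⟨β, φ β, le_refl _, rfl⟩
  have h_stepk : ∀ m ∈ Δ, m + k ∈ Δ := by
    rintro m ⟨β, α, hφ, rfl⟩
    exact ⟨β, α + 1, by omega, by ring⟩
  have h_stepn : ∀ m ∈ Δ, m + n ∈ Δ := by
    rintro m ⟨β, α, hφ, rfl⟩
    by_cases h : (β : ℕ) + 1 < k
    · exact ⟨⟨(β : ℕ) + 1, h⟩, α, le_trans (hchain β h) hφ, by ring⟩
    · have hβv : (β : ℕ) = k - 1 := by have := β.isLt; omega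
      have hβeq : β = ⟨k - 1, Nat.sub_lt hk one_pos⟩ := Fin.ext hβv
      refine ⟨⟨0, hk⟩, α + n, ?_, ?_⟩
      · rw [hβeq] at hφ; omega
      · have h3 : ((β : ℕ)) * n + n = k * n := by
          rw [hβv]
          calc (k-1) * n + n = ((k-1) + 1) * n := by ring
            _ = k * n := by rw [Nat.sub_add_cancel hk]
        calc α * k + (β : ℕ) * n + n = α * k + k * n := by omega
          _ = (α + n) * k + 0 * n := by ring
  have h_addk : ∀ m ∈ Δ, ∀ a : ℕ, m + a * k ∈ Δ := by
    intro m hm a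
    induction a with
    | zero => simpa using hm
    | succ a ih =>
        have h1 := h_stepk _ ih
        have h2 : m + (a + 1) * k = m + a * k + k := by ring
        rwa [h2]
  have h_ideal : ∀ m ∈ Δ, ∀ a b : ℕ, m + (a * k + b * n) ∈ Δ := by
    intro m hm a b
    induction b with
    | zero => simpa using h_addk m hm a
    | succ b ih =>
        have h1 := h_stepn _ ih
        have h2 : m + (a * k + (b + 1) * n) = m + (a * k + b * n) + n := by ring
        rwa [h2]
  have h_ginj : ∀ β β' : Fin k, g β = g β' → β = β' := by
    intro β β' h
    exact Fin.ext (rep_unique hk hkn β.isLt β'.isLt h).1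
  have h_σval : ∀ i : Fin k, ((σ i : ℕ)) = ((i : ℕ) + 1) % k := by
    intro i
    rw [hσdef]
    by_cases h : (i : ℕ) + 1 < k
    · simp [dif_pos h, Nat.mod_eq_of_lt h]
    · have hiv : (i : ℕ) + 1 = k := by have := i.isLt; omega
      simp [dif_neg h, hiv, Nat.mod_self]
  have h_σinj : Function.Injective σ := by
    intro i i' h
    have h1 := congrArg (Fin.val) h
    rw [h_σval, h_σval] at h1
    have hi := i.isLt; have hi' := i'.isLt
    apply Fin.ext
    rcases Nat.lt_or_ge ((i : ℕ) + 1) k with h2 | h2 <;>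
      rcases Nat.lt_or_ge ((i' : ℕ) + 1) k with h3 | h3
    · rw [Nat.mod_eq_of_lt h2, Nat.mod_eq_of_lt h3] at h1; omega
    · have e3 : (i' : ℕ) + 1 = k := by omega
      rw [Nat.mod_eq_of_lt h2, e3, Nat.mod_self] at h1; omega
    · have e2 : (i : ℕ) + 1 = k := by omega
      rw [e2, Nat.mod_self, Nat.mod_eq_of_lt h3] at h1; omega
    · omega
  have h_ns : ∀ j : Fin k, j ∉ S → g (σ j) = g j + n := by
    intro j hj
    rw [hSdef] at hj
    simp only [Set.mem_setOf_eq] at hj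
    by_cases h : (j : ℕ) + 1 < k
    · rw [dif_pos h] at hj
      have he : φ ⟨(j : ℕ) + 1, h⟩ = φ j := le_antisymm (hchain j h) (by omega)
      rw [hgdef, hσdef]
      simp only [dif_pos h, he]
      push_cast; ring
    · rw [dif_neg h] at hj
      have hjv : (j : ℕ) = k - 1 := by have := j.isLt; omega
      have hje : j = ⟨k - 1, Nat.sub_lt hk one_pos⟩ := Fin.ext hjv
      have he : φ ⟨0, hk⟩ = φ j + n := by rw [hje] at hj ⊢; omega
      rw [hgdef, hσdef]
      simp only [dif_neg h, he]
      have h3 : (j : ℕ) * n + n = k * n := by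
        rw [hjv]
        calc (k-1) * n + n = ((k-1) + 1) * n := by ring
          _ = k * n := by rw [Nat.sub_add_cancel hk]
      calc (φ j + n) * k + 0 * n = φ j * k + k * n := by ring
        _ = φ j * k + ((j : ℕ) * n + n) := by omega
        _ = φ j * k + (j : ℕ) * n + n := by ring
  have h_iter : ∀ t : ℕ, ∀ β : Fin k,
      (∃ j ∈ S, ∃ c : ℕ, g (σ^[t] β) = g (σ j) + c * n) ∨ g (σ^[t] β) = g β + t * n := by
    intro t
    induction t with
    | zero => intro β; right; simp
    | succ t ih =>
        intro β
        by_cases hj : σ^[t] β ∈ S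
        · left
          exact ⟨σ^[t] β, hj, 0, by rw [Function.iterate_succ_apply']; simp⟩
        · have hg : g (σ (σ^[t] β)) = g (σ^[t] β) + n := h_ns _ hj
          rcases ih β with ⟨j', hj', c, hc⟩ | hrt
          · left
            exact ⟨j', hj', c + 1, by rw [Function.iterate_succ_apply', hg, hc]; ring⟩
          · right
            rw [Function.iterate_succ_apply', hg, hrt]; ring
  have h_σk : ∀ β : Fin k, σ^[k] β = β := by
    have h_itv : ∀ t : ℕ, ∀ β : Fin k, ((σ^[t] β : ℕ)) = ((β : ℕ) + t) % k := by
      intro t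
      induction t with
      | zero => intro β; simp [Nat.mod_eq_of_lt β.isLt]
      | succ t ih =>
          intro β
          rw [Function.iterate_succ_apply', h_σval, ih]
          rw [Nat.mod_add_mod]
          ring_nf
    intro β
    apply Fin.ext
    rw [h_itv k β, Nat.add_mod_right, Nat.mod_eq_of_lt β.isLt]
  have h_reach : ∀ β : Fin k, ∃ j ∈ S, ∃ c : ℕ, g β = g (σ j) + c * n := by
    intro β
    rcases h_iter k β with ⟨j, hj, c, hc⟩ | h
    · rw [h_σk] at hc; exact ⟨j, hj, c, hc⟩
    · rw [h_σk] at h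
      have hpos : 0 < k * n := Nat.mul_pos hk hn
      omega
  have h_notk : ∀ β : Fin k, ∀ d ∈ Δ, g β ≠ d + k := by
    rintro β d ⟨β', α', hφ', rfl⟩ heq
    have h2 : φ β * k + (β : ℕ) * n = (α' + 1) * k + (β' : ℕ) * n := by
      rw [hgdef] at heq; simp only [] at heq; rw [heq]; ring
    obtain ⟨hb, ha⟩ := rep_unique hk hkn β.isLt β'.isLt h2
    have : β = β' := Fin.ext hb
    subst this
    omega
  have h_notn : ∀ i ∈ S, ∀ d ∈ Δ, g (σ i) ≠ d + n := by
    rintro i hi d ⟨β', α', hφ', rfl⟩ heq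
    rw [hSdef] at hi; simp only [Set.mem_setOf_eq] at hi
    rw [hgdef] at heq; simp only [] at heq
    by_cases hb : (β' : ℕ) + 1 < k
    · have h2 : φ (σ i) * k + ((σ i : ℕ)) * n = α' * k + ((β' : ℕ) + 1) * n := by
        rw [heq]; ring
      obtain ⟨hbv, hav⟩ := rep_unique hk hkn (σ i).isLt hb h2
      by_cases hik : (i : ℕ) + 1 < k
      · have hσi : σ i = ⟨(i : ℕ) + 1, hik⟩ := by rw [hσdef]; simp [dif_pos hik]
        rw [dif_pos hik] at hi
        have h5 : ((σ i : ℕ)) = (i : ℕ) + 1 := by rw [hσi]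
        have hβ'i : β' = i := Fin.ext (by omega)
        subst hβ'i
        rw [hσi] at hav
        omega
      · have hσi : σ i = ⟨0, hk⟩ := by rw [hσdef]; simp [dif_neg hik]
        have h5 : ((σ i : ℕ)) = 0 := by rw [hσi]
        omega
    · have hβ'v : (β' : ℕ) = k - 1 := by have := β'.isLt; omega
      have h2 : φ (σ i) * k + ((σ i : ℕ)) * n = (α' + n) * k + 0 * n := by
        rw [heq, hβ'v]
        have h3 : (k - 1) + 1 = k := by omega
        calc α' * k + (k-1) * n + n = α' * k + ((k-1) + 1) * n := by ring
          _ = (α' + n) * k + 0 * n := by rw [h3]; ring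
      obtain ⟨hbv, hav⟩ := rep_unique hk hkn (σ i).isLt hk h2
      by_cases hik : (i : ℕ) + 1 < k
      · have hσi : σ i = ⟨(i : ℕ) + 1, hik⟩ := by rw [hσdef]; simp [dif_pos hik]
        have h5 : ((σ i : ℕ)) = (i : ℕ) + 1 := by rw [hσi]
        omega
      · rw [dif_neg hik] at hi
        have hσi : σ i = ⟨0, hk⟩ := by rw [hσdef]; simp [dif_neg hik]
        have hβ'i : β' = i := Fin.ext (by have := i.isLt; omega)
        subst hβ'i
        rw [hσi] at hav
        omega
  haveI : Fintype ↥S := Fintype.ofFinite _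
  have hcard : Fintype.card ↥S = S.ncard := by
    rw [Set.ncard_eq_toFinset_card']
    exact (Set.toFinset_card S).symm
  have e : ↥S ≃ Fin (S.ncard) := Fintype.equivFinOfCardEq hcard
  have hmem : S.ncard ∈
      {r : ℕ | ∃ a : Fin r → ℕ, (∀ j, a j ∈ Δ) ∧ Δ = ⋃ j, ((a j + ·) '' Γ)} := by
    refine ⟨fun j => g (σ (e.symm j)), fun j => h_gΔ _, ?_⟩
    ext m
    simp only [Set.mem_iUnion, Set.mem_image]
    constructor
    · rintro ⟨β, α, hφ, rfl⟩
      obtain ⟨j, hj, c, hc⟩ := h_reach β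
      refine ⟨e ⟨j, hj⟩, (α - φ β) * k + c * n, ⟨α - φ β, c, rfl⟩, ?_⟩
      simp only [Equiv.symm_apply_apply]
      have h1 : φ β * k ≤ α * k := Nat.mul_le_mul_right k hφ
      have h2 : (α - φ β) * k = α * k - φ β * k := Nat.sub_mul α (φ β) k
      simp only [hgdef] at hc ⊢
      omega
    · rintro ⟨j, x, ⟨u, v, rfl⟩, rfl⟩
      exact h_ideal _ (h_gΔ _) u v
  have hlow : ∀ r ∈
      {r : ℕ | ∃ a : Fin r → ℕ, (∀ j, a j ∈ Δ) ∧ Δ = ⋃ j, ((a j + ·) '' Γ)},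
      S.ncard ≤ r := by
    rintro r ⟨a, haΔ, haU⟩
    have hex : ∀ i : ↥S, ∃ j : Fin r, a j = g (σ (i : Fin k)) := by
      intro i
      have hm : g (σ (i : Fin k)) ∈ Δ := h_gΔ _
      rw [haU] at hm
      simp only [Set.mem_iUnion, Set.mem_image] at hm
      obtain ⟨j, x, hxΓ, hx⟩ := hm
      obtain ⟨u, v, rfl⟩ := hxΓ
      rcases Nat.eq_zero_or_pos u with hu | hu
      · rcases Nat.eq_zero_or_pos v with hv | hv
        · subst hu; subst hv; exact ⟨j, by simpa using hx⟩
        · exfalso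
          refine h_notn _ i.2 (a j + (u * k + (v - 1) * n))
            (h_ideal _ (haΔ j) u (v - 1)) ?_
          have h4 : v * n = (v - 1) * n + n := by
            calc v * n = ((v - 1) + 1) * n := by rw [Nat.sub_add_cancel hv]
              _ = (v - 1) * n + n := by ring
          omega
      · exfalso
        refine h_notk (σ (i : Fin k)) (a j + ((u - 1) * k + v * n))
          (h_ideal _ (haΔ j) (u - 1) v) ?_
        have h4 : u * k = (u - 1) * k + k := by
          calc u * k = ((u - 1) + 1) * k := by rw [Nat.sub_add_cancel hu]
            _ = (u - 1) * k + k := by ring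
        omega
    choose f hf using hex
    have hfi : Function.Injective f := by
      intro i i' hfe
      have hgg : g (σ (i : Fin k)) = g (σ (i' : Fin k)) := by
        rw [← hf i, ← hf i', hfe]
      exact Subtype.ext (h_σinj (h_ginj _ _ hgg))
    calc S.ncard = Fintype.card ↥S := hcard.symm
      _ ≤ Fintype.card (Fin r) := Fintype.card_le_of_injective f hfi
      _ = r := Fintype.card_fin r
  unfold semigroupIdealMinGens
  exact le_antisymm (Nat.sInf_le hmem) (le_csInf ⟨_, hmem⟩ hlow)
end
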